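/- arXiv:1509.04323 — 6 statements merged into one kernel-verified Lean document; each statement's English description precedes it below -/
import Mathlib

section
/- For a nonzero discriminant D written as D = d·ℓ² with d a fundamental discriminant and ℓ > 0, define ψ_D(n) = (d / (n/gcd(n,ℓ))) (Kronecker symbol). Then for Re(s) > 1, the Dirichlet series L(s,ψ_D) = ∑_{n≥1} ψ_D(n) n^{-s} satisfies L(s,ψ_D) = L(s,ψ_d) · ∏_{p | ℓ} [1 + (1 - ψ_d(p)) ∑_{j=1}^{ord_p(ℓ)} p^{-js}]. -/
/-- The Kronecker symbol at a prime `p`. For odd `p` this is the Legendre/Jacobi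
symbol; for `p = 2` it is `0` if `d` is even, `1` if `d ≡ ±1 (mod 8)`, `-1` otherwise. -/
def kronP (d : ℤ) (p : ℕ) : ℤ :=
  if p = 2 then (if d % 2 = 0 then 0 else if d % 8 = 1 ∨ d % 8 = 7 then 1 else -1)
  else jacobiSym d p

/-- The Kronecker symbol `(d / n)` for `n ≥ 1`, extended multiplicatively over the
prime factorization of `n`. -/
def kron (d : ℤ) (n : ℕ) : ℤ :=
  ((n.primeFactorsList).map (kronP d)).prod

/-- `d` is a fundamental discriminant. -/
def IsFundamentalDiscriminant (d : ℤ) : Prop :=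
  (d % 4 = 1 ∧ Squarefree d) ∨
  (d % 4 = 0 ∧ Squarefree (d / 4) ∧ (d / 4 % 4 = 2 ∨ d / 4 % 4 = 3))

section Aux

open ArithmeticFunction Finset

lemma kron_one (d : ℤ) : kron d 1 = 1 := by simp [kron]

lemma kron_mul (d : ℤ) {m n : ℕ} (hm : m ≠ 0) (hn : n ≠ 0) :
    kron d (m * n) = kron d m * kron d n := by
  unfold kron
  rw [← List.prod_append, ← List.map_append]
  exact List.Perm.prod_eq <| List.Perm.map _ <| Nat.perm_primeFactorsList_mul hm hn

lemma kron_prime (d : ℤ) {p : ℕ} (hp : p.Prime) : kron d p = kronP d p := by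
  simp [kron, Nat.primeFactorsList_prime hp]

lemma kron_prime_pow (d : ℤ) {p : ℕ} (hp : p.Prime) (k : ℕ) :
    kron d (p ^ k) = (kron d p) ^ k := by
  rw [kron_prime d hp]
  simp [kron, hp.primeFactorsList_pow, List.map_replicate, List.prod_replicate]

lemma kronP_trichotomy (d : ℤ) (p : ℕ) : kronP d p = 0 ∨ kronP d p = 1 ∨ kronP d p = -1 := by
  unfold kronP
  split
  · split
    · exact Or.inl rfl
    · split
      · exact Or.inr (Or.inl rfl)
      · exact Or.inr (Or.inr rfl)
  · exact jacobiSym.trichotomy d p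

lemma kron_trichotomy (d : ℤ) (n : ℕ) : kron d n = 0 ∨ kron d n = 1 ∨ kron d n = -1 := by
  unfold kron
  induction n.primeFactorsList with
  | nil => exact Or.inr (Or.inl rfl)
  | cons p l ih =>
    rw [List.map_cons, List.prod_cons]
    rcases kronP_trichotomy d p with h | h | h <;>
      rcases ih with h' | h' | h' <;> simp [h, h']

lemma kron_abs_le (d : ℤ) (n : ℕ) : ‖((kron d n : ℤ) : ℂ)‖ ≤ 1 := by
  rcases kron_trichotomy d n with h | h | h <;> simp [h]

lemma gcd_mul_cop {m n : ℕ} (k : ℕ) (h : m.Coprime n) :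
    Nat.gcd (m * n) k = Nat.gcd m k * Nat.gcd n k := by
  apply Nat.dvd_antisymm
  · obtain ⟨a, b, ham, hbn, hab⟩ := exists_dvd_and_dvd_of_dvd_mul (Nat.gcd_dvd_left (m*n) k)
    rw [hab]
    exact mul_dvd_mul
      (Nat.dvd_gcd ham (dvd_trans (Dvd.intro b rfl) (hab ▸ Nat.gcd_dvd_right (m*n) k)))
      (Nat.dvd_gcd hbn (dvd_trans (Dvd.intro_left a rfl) (hab ▸ Nat.gcd_dvd_right (m*n) k)))
  · have hcop : Nat.Coprime (Nat.gcd m k) (Nat.gcd n k) :=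
      Nat.Coprime.coprime_dvd_left (Nat.gcd_dvd_left _ _)
        (Nat.Coprime.coprime_dvd_right (Nat.gcd_dvd_left _ _) h)
    exact Nat.dvd_gcd (mul_dvd_mul (Nat.gcd_dvd_left _ _) (Nat.gcd_dvd_left _ _))
      (Nat.Coprime.mul_dvd_of_dvd_of_dvd hcop (Nat.gcd_dvd_right _ _) (Nat.gcd_dvd_right _ _))

/-- `ψ_D` as an arithmetic function. -/
noncomputable def Ff (d : ℤ) (ℓ : ℕ) : ArithmeticFunction ℂ :=
  ⟨fun n => if n = 0 then 0 else ((kron d (n / Nat.gcd n ℓ) : ℤ) : ℂ), by simp⟩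

/-- `ψ_d` as an arithmetic function. -/
noncomputable def Kf (d : ℤ) : ArithmeticFunction ℂ :=
  ⟨fun n => if n = 0 then 0 else ((kron d n : ℤ) : ℂ), by simp⟩

/-- The finitely supported correction factor. -/
noncomputable def Gf (d : ℤ) (ℓ : ℕ) : ArithmeticFunction ℂ :=
  ⟨fun m => if m = 0 then 0 else if m ∣ ℓ then ∏ p ∈ m.primeFactors, (1 - ((kron d p : ℤ) : ℂ))
    else 0, by simp⟩

lemma Ff_apply (d : ℤ) (ℓ : ℕ) {n : ℕ} (hn : n ≠ 0) :
    Ff d ℓ n = ((kron d (n / Nat.gcd n ℓ) : ℤ) : ℂ) := by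
  simp [Ff, hn]

lemma Kf_apply (d : ℤ) {n : ℕ} (hn : n ≠ 0) : Kf d n = ((kron d n : ℤ) : ℂ) := by
  simp [Kf, hn]

lemma Gf_apply (d : ℤ) (ℓ : ℕ) {m : ℕ} (hm : m ≠ 0) :
    Gf d ℓ m = if m ∣ ℓ then ∏ p ∈ m.primeFactors, (1 - ((kron d p : ℤ) : ℂ)) else 0 := by
  simp [Gf, hm]

lemma Kf_mult (d : ℤ) : (Kf d).IsMultiplicative := by
  constructor
  · simp [Kf, kron_one]
  · intro m n _
    rcases eq_or_ne m 0 with rfl | hm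
    · simp [Kf]
    rcases eq_or_ne n 0 with rfl | hn
    · simp [Kf]
    rw [Kf_apply d (mul_ne_zero hm hn), Kf_apply d hm, Kf_apply d hn,
      kron_mul d hm hn, Int.cast_mul]

lemma Ff_mult (d : ℤ) (ℓ : ℕ) (hℓ : ℓ ≠ 0) : (Ff d ℓ).IsMultiplicative := by
  constructor
  · simp [Ff, Nat.gcd_one_left ℓ, kron_one]
  · intro m n hmn
    rcases eq_or_ne m 0 with rfl | hm
    · simp [Ff]
    rcases eq_or_ne n 0 with rfl | hn
    · simp [Ff]
    have key : ∀ a : ℕ, a ≠ 0 → a / a.gcd ℓ ≠ 0 := fun a ha =>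
      Nat.div_ne_zero_iff.mpr ⟨Nat.gcd_ne_zero_left ha,
        (Nat.le_of_dvd (Nat.pos_of_ne_zero ha) (Nat.gcd_dvd_left a ℓ))⟩
    rw [Ff_apply d ℓ (mul_ne_zero hm hn), Ff_apply d ℓ hm, Ff_apply d ℓ hn]
    rw [gcd_mul_cop ℓ hmn,
      ← Nat.div_mul_div_comm (Nat.gcd_dvd_left m ℓ) (Nat.gcd_dvd_left n ℓ),
      kron_mul d (key m hm) (key n hn), Int.cast_mul]

lemma Gf_mult (d : ℤ) (ℓ : ℕ) : (Gf d ℓ).IsMultiplicative := by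
  constructor
  · simp [Gf]
  · intro m n hmn
    rcases eq_or_ne m 0 with rfl | hm
    · simp [Gf]
    rcases eq_or_ne n 0 with rfl | hn
    · simp [Gf]
    rw [Gf_apply d ℓ (mul_ne_zero hm hn), Gf_apply d ℓ hm, Gf_apply d ℓ hn]
    by_cases hd : m ∣ ℓ ∧ n ∣ ℓ
    · rw [if_pos hd.1, if_pos hd.2, if_pos (hmn.mul_dvd_of_dvd_of_dvd hd.1 hd.2),
        Nat.primeFactors_mul hm hn, Finset.prod_union hmn.disjoint_primeFactors]
    · have : ¬ m * n ∣ ℓ := fun hmnd => hd ⟨(dvd_mul_right m n).trans hmnd,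
        (dvd_mul_left n m).trans hmnd⟩
      rw [if_neg this]
      rcases not_and_or.mp hd with h | h
      · rw [if_neg h, zero_mul]
      · rw [if_neg h, mul_zero]

lemma gcd_pow_eq {p : ℕ} (hp : p.Prime) {ℓ : ℕ} (hℓ : ℓ ≠ 0) (i : ℕ) :
    Nat.gcd (p ^ i) ℓ = p ^ (min i (ℓ.factorization p)) := by
  apply Nat.dvd_antisymm
  · obtain ⟨k, hk, hg⟩ := (Nat.dvd_prime_pow hp).mp (Nat.gcd_dvd_left (p^i) ℓ)
    have hkv : k ≤ ℓ.factorization p :=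
      (hp.pow_dvd_iff_le_factorization hℓ).mp (hg ▸ Nat.gcd_dvd_right (p^i) ℓ)
    exact hg ▸ pow_dvd_pow p (le_min hk hkv)
  · exact Nat.dvd_gcd (pow_dvd_pow p (min_le_left _ _))
      ((pow_dvd_pow p (min_le_right i _)).trans (Nat.ordProj_dvd ℓ p))

lemma alg (χ : ℂ) (i t : ℕ) (ht : t ≤ i) :
    χ ^ (i - t) = χ ^ i + (1 - χ) * ∑ j ∈ Finset.Icc 1 t, χ ^ (i - j) := by
  induction t with
  | zero => simp
  | succ t ih =>
    have ht' : t ≤ i := Nat.le_of_succ_le ht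
    rw [Finset.sum_Icc_succ_top (by omega : 1 ≤ t + 1), mul_add, ← add_assoc, ← ih ht']
    have h1 : i - t = (i - (t+1)) + 1 := by omega
    rw [h1, pow_succ]
    ring

lemma Ff_eq (d : ℤ) {ℓ : ℕ} (hℓ : ℓ ≠ 0) : Ff d ℓ = Gf d ℓ * Kf d := by
  rw [ArithmeticFunction.IsMultiplicative.eq_iff_eq_on_prime_powers _ (Ff_mult d ℓ hℓ) _
    ((Gf_mult d ℓ).mul (Kf_mult d))]
  intro p i hp
  set v := ℓ.factorization p with hv
  set χ : ℂ := ((kron d p : ℤ) : ℂ) with hχ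
  have hpne : (p:ℕ) ≠ 0 := hp.pos.ne'
  have hpow : ∀ k : ℕ, p ^ k ≠ 0 := fun k => pow_ne_zero k hpne
  have hL : Ff d ℓ (p ^ i) = χ ^ (i - min i v) := by
    rw [Ff_apply d ℓ (hpow i), gcd_pow_eq hp hℓ i,
      Nat.pow_div (min_le_left i v) hp.pos, kron_prime_pow d hp, Int.cast_pow]
  rw [hL, ArithmeticFunction.mul_apply,
    Nat.sum_divisorsAntidiagonal (f := fun x y => Gf d ℓ x * Kf d y),
    Nat.sum_divisors_prime_pow hp]
  have hterm : ∀ j ∈ Finset.range (i+1), Gf d ℓ (p ^ j) * Kf d (p ^ i / p ^ j)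
      = if j = 0 then χ ^ i else if j ≤ v then (1 - χ) * χ ^ (i - j) else 0 := by
    intro j hj
    have hji : j ≤ i := Nat.lt_succ_iff.mp (Finset.mem_range.mp hj)
    rw [Nat.pow_div hji hp.pos, Kf_apply d (hpow _), kron_prime_pow d hp, Int.cast_pow,
      Gf_apply d ℓ (hpow j)]
    rcases eq_or_ne j 0 with rfl | hj0
    · simp [hχ]
    · rw [if_neg hj0, Nat.primeFactors_prime_pow hj0 hp, Finset.prod_singleton]
      by_cases hle : j ≤ v
      · rw [if_pos ((hp.pow_dvd_iff_le_factorization hℓ).mpr hle), if_pos hle]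
      · rw [if_neg (fun hdd => hle ((hp.pow_dvd_iff_le_factorization hℓ).mp hdd)), if_neg hle,
          zero_mul]
  rw [Finset.sum_congr rfl hterm,
    show Finset.range (i+1) = insert 0 (Finset.Icc 1 i) by ext x; simp; omega,
    Finset.sum_insert (by simp), if_pos rfl]
  have h2 : ∑ j ∈ Finset.Icc 1 i,
      (if j = 0 then χ ^ i else if j ≤ v then (1-χ)*χ^(i-j) else 0)
      = ∑ j ∈ Finset.Icc 1 (min i v), (1-χ)*χ^(i-j) := by
    rw [Finset.sum_congr rfl (g := fun j => if j ≤ v then (1-χ)*χ^(i-j) else 0)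
      (fun j hj => by rw [if_neg (by simp at hj; omega)]), ← Finset.sum_filter]
    apply Finset.sum_congr _ (fun _ _ => rfl)
    ext x
    simp only [Finset.mem_filter, Finset.mem_Icc]
    omega
  rw [h2, alg χ i (min i v) (min_le_left _ _), Finset.mul_sum]

/-- `n ↦ n^{-s}` as an arithmetic function. -/
noncomputable def Ef (s : ℂ) : ArithmeticFunction ℂ :=
  ⟨fun n => if n = 0 then 0 else (n : ℂ) ^ (-s), by simp⟩

lemma Ef_apply (s : ℂ) {n : ℕ} (hn : n ≠ 0) : Ef s n = (n : ℂ) ^ (-s) := by simp [Ef, hn]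

lemma Ef_mult (s : ℂ) : (Ef s).IsMultiplicative := by
  constructor
  · simp [Ef, Complex.one_cpow]
  · intro m n _
    rcases eq_or_ne m 0 with rfl | hm
    · simp [Ef]
    rcases eq_or_ne n 0 with rfl | hn
    · simp [Ef]
    rw [Ef_apply s (mul_ne_zero hm hn), Ef_apply s hm, Ef_apply s hn,
      show ((m * n : ℕ) : ℂ) = ((m : ℝ) : ℂ) * ((n : ℝ) : ℂ) by push_cast; ring,
      Complex.mul_cpow_ofReal_nonneg (Nat.cast_nonneg m) (Nat.cast_nonneg n)]
    norm_cast

lemma Ef_prime_pow (s : ℂ) {p : ℕ} (hp : p ≠ 0) (j : ℕ) :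
    Ef s (p ^ j) = (p : ℂ) ^ (-(j : ℂ) * s) := by
  rw [Ef_apply s (pow_ne_zero j hp), Nat.cast_pow, ← Complex.natCast_cpow_natCast_mul]
  congr 1
  ring

lemma LSeries_G (d : ℤ) {ℓ : ℕ} (hℓ : ℓ ≠ 0) (s : ℂ) :
    LSeries (⇑(Gf d ℓ)) s =
      ∏ p ∈ ℓ.primeFactors, (1 + (1 - ((kron d p : ℤ) : ℂ)) *
        ∑ j ∈ Finset.Icc 1 (ℓ.factorization p), (p : ℂ) ^ (-(j : ℂ) * s)) := by
  have hterm0 : ∀ n ∉ ℓ.divisors, LSeries.term (⇑(Gf d ℓ)) s n = 0 := by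
    intro n hn
    rcases eq_or_ne n 0 with rfl | hn0
    · simp
    · have hnd : ¬ n ∣ ℓ := fun h => hn (Nat.mem_divisors.mpr ⟨h, hℓ⟩)
      rw [LSeries.term_of_ne_zero hn0, Gf_apply d ℓ hn0, if_neg hnd, zero_div]
  rw [LSeries, tsum_eq_sum hterm0]
  have hstep : ∀ n ∈ ℓ.divisors, LSeries.term (⇑(Gf d ℓ)) s n = ((Gf d ℓ).pmul (Ef s)) n := by
    intro n hn
    have hn0 : n ≠ 0 := Nat.pos_of_mem_divisors hn |>.ne'
    rw [LSeries.term_of_ne_zero hn0, ArithmeticFunction.pmul_apply, Ef_apply s hn0,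
      Complex.cpow_neg, div_eq_mul_inv]
  rw [Finset.sum_congr rfl hstep, ← ArithmeticFunction.coe_mul_zeta_apply]
  have Hmult : (((Gf d ℓ).pmul (Ef s)) * ↑(ArithmeticFunction.zeta)).IsMultiplicative :=
    ((Gf_mult d ℓ).pmul (Ef_mult s)).mul ArithmeticFunction.isMultiplicative_zeta.natCast
  rw [Hmult.multiplicative_factorization _ hℓ, Finsupp.prod, Nat.support_factorization]
  apply Finset.prod_congr rfl
  intro p hp
  have hpp : p.Prime := Nat.prime_of_mem_primeFactors hp
  set v := ℓ.factorization p with hv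
  rw [ArithmeticFunction.coe_mul_zeta_apply, Nat.sum_divisors_prime_pow hpp]
  have hterm : ∀ j ∈ Finset.range (v + 1), ((Gf d ℓ).pmul (Ef s)) (p ^ j)
      = if j = 0 then 1 else (1 - ((kron d p : ℤ) : ℂ)) * (p : ℂ) ^ (-(j : ℂ) * s) := by
    intro j hj
    have hjv : j ≤ v := Nat.lt_succ_iff.mp (Finset.mem_range.mp hj)
    rw [ArithmeticFunction.pmul_apply, Ef_prime_pow s hpp.pos.ne' j,
      Gf_apply d ℓ (pow_ne_zero j hpp.pos.ne'),
      if_pos ((hpp.pow_dvd_iff_le_factorization hℓ).mpr hjv)]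
    rcases eq_or_ne j 0 with rfl | hj0
    · simp [Complex.cpow_def]
    · rw [if_neg hj0, Nat.primeFactors_prime_pow hj0 hpp, Finset.prod_singleton]
  rw [Finset.sum_congr rfl hterm,
    show Finset.range (v + 1) = insert 0 (Finset.Icc 1 v) by ext x; simp; omega,
    Finset.sum_insert (by simp), if_pos rfl, Finset.mul_sum]
  congr 1
  exact Finset.sum_congr rfl fun j hj => by
    rw [if_neg (by simp at hj; omega)]

lemma tsum_shift {f : ℕ → ℂ} {s : ℂ} (hf : LSeriesSummable f s) :
    LSeries f s = ∑' n : ℕ, f (n + 1) / ((n : ℂ) + 1) ^ s := by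
  rw [LSeries, Summable.tsum_eq_zero_add hf]
  simp only [LSeries.term_zero, zero_add]
  apply tsum_congr
  intro n
  rw [LSeries.term_of_ne_zero (Nat.succ_ne_zero n),
    show ((n + 1 : ℕ) : ℂ) = (n : ℂ) + 1 by push_cast; ring]

end Aux

/-- For a nonzero discriminant `D = d ℓ²` (`d` fundamental, `ℓ > 0`) and `Re s > 1`,
`L(s, ψ_D) = L(s, ψ_d) ∏_{p ∣ ℓ} [1 + (1 - ψ_d(p)) ∑_{j=1}^{ord_p ℓ} p^{-js}]`,
where `ψ_D(n) = (d / (n / gcd(n, ℓ)))`. -/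
theorem stmt0 (D d : ℤ) (ℓ : ℕ) (hD0 : D ≠ 0) (hdisc : D % 4 = 0 ∨ D % 4 = 1)
    (hd : IsFundamentalDiscriminant d) (hℓ : 0 < ℓ) (hfac : D = d * (ℓ : ℤ) ^ 2)
    (s : ℂ) (hs : 1 < s.re) :
    ∑' n : ℕ, (kron d ((n + 1) / Nat.gcd (n + 1) ℓ) : ℂ) / ((n : ℂ) + 1) ^ s =
      (∑' n : ℕ, (kron d (n + 1) : ℂ) / ((n : ℂ) + 1) ^ s) *
        ∏ p ∈ ℓ.primeFactors,
          (1 + (1 - (kron d p : ℂ)) *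
            ∑ j ∈ Finset.Icc 1 (ℓ.factorization p), (p : ℂ) ^ (-(j : ℂ) * s)) := by
  have hℓ0 : ℓ ≠ 0 := hℓ.ne'
  have hFsum : LSeriesSummable (⇑(Ff d ℓ)) s :=
    LSeriesSummable_of_bounded_of_one_lt_re
      (fun n hn => by rw [Ff_apply d ℓ hn]; exact kron_abs_le d _) hs
  have hKsum : LSeriesSummable (⇑(Kf d)) s :=
    LSeriesSummable_of_bounded_of_one_lt_re
      (fun n hn => by rw [Kf_apply d hn]; exact kron_abs_le d n) hs
  have hGsum : LSeriesSummable (⇑(Gf d ℓ)) s := by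
    refine summable_of_ne_finset_zero (s := ℓ.divisors) ?_
    intro n hn
    rcases eq_or_ne n 0 with rfl | hn0
    · simp
    · rw [LSeries.term_of_ne_zero hn0, Gf_apply d ℓ hn0,
        if_neg (fun h => hn (Nat.mem_divisors.mpr ⟨h, hℓ0⟩)), zero_div]
  have hL : ∑' n : ℕ, (kron d ((n + 1) / Nat.gcd (n + 1) ℓ) : ℂ) / ((n : ℂ) + 1) ^ s
      = LSeries (⇑(Ff d ℓ)) s := by
    rw [tsum_shift hFsum]
    exact tsum_congr fun n => by rw [Ff_apply d ℓ (Nat.succ_ne_zero n)]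
  have hK : ∑' n : ℕ, (kron d (n + 1) : ℂ) / ((n : ℂ) + 1) ^ s = LSeries (⇑(Kf d)) s := by
    rw [tsum_shift hKsum]
    exact tsum_congr fun n => by rw [Kf_apply d (Nat.succ_ne_zero n)]
  rw [hL, hK, Ff_eq d hℓ0, ArithmeticFunction.LSeries_mul' hGsum hKsum,
    LSeries_G d hℓ0 s, mul_comm]
end

section
/- Define r(n) = (1/2)·#{(x,y) ∈ ℤ² : n = x² + 4y²} for n ≥ 1. Then r is a multiplicative arithmetic function. -/
/-- `r n = (1/2) · #{(x, y) ∈ ℤ² : n = x² + 4y²}`. -/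
noncomputable def r (n : ℕ) : ℝ :=
  (Set.ncard {p : ℤ × ℤ | (n : ℤ) = p.1 ^ 2 + 4 * p.2 ^ 2} : ℝ) / 2

namespace Stmt2Aux

abbrev GI := GaussianInt

open EuclideanDomain

/-- Solutions of `norm z = n`. -/
def S (n : ℕ) : Set GI := {z | z.norm = (n : ℤ)}

/-- Solutions of `n = x² + 4y²`. -/
def A (n : ℕ) : Set (ℤ × ℤ) := {p | (n : ℤ) = p.1 ^ 2 + 4 * p.2 ^ 2}

lemma norm_def' (z : GI) : z.norm = z.re ^ 2 + z.im ^ 2 := by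
  rw [Zsqrtd.norm_def]; ring

lemma dvd_norm {a b : GI} (h : a ∣ b) : a.norm ∣ b.norm := by
  obtain ⟨c, rfl⟩ := h; rw [Zsqrtd.norm_mul]; exact dvd_mul_right _ _

lemma star_dvd {a b : GI} (h : a ∣ b) : star a ∣ star b := by
  obtain ⟨c, rfl⟩ := h; exact ⟨star c, by rw [star_mul']⟩

/-- GCD trick: `a ∣ x*y → a ∣ gcd a x * gcd a y`. -/
lemma dvd_gcd_mul_gcd {a x y : GI} (ha : a ≠ 0) (h : a ∣ x * y) :
    a ∣ gcd a x * gcd a y := by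
  set g := gcd a x with hg
  have hga : g ∣ a := gcd_dvd_left a x
  have hgx : g ∣ x := gcd_dvd_right a x
  obtain ⟨b, hb⟩ := hga
  obtain ⟨x₁, hx₁⟩ := hgx
  have hgne : g ≠ 0 := by
    intro h0
    exact ha (by rw [hb, h0, zero_mul])
  -- IsCoprime b x₁ via Bezout
  have hbez := EuclideanDomain.gcd_eq_gcd_ab a x
  have hco : IsCoprime b x₁ := by
    have h1 : g * 1 = g * (b * gcdA a x + x₁ * gcdB a x) := by
      rw [mul_one]
      calc g = a * gcdA a x + x * gcdB a x := hbez
        _ = g * (b * gcdA a x + x₁ * gcdB a x) := by rw [hb, hx₁]; ring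
    have h2 : (1 : GI) = b * gcdA a x + x₁ * gcdB a x := mul_left_cancel₀ hgne h1
    exact ⟨gcdA a x, gcdB a x, by rw [mul_comm (gcdA a x) b, mul_comm (gcdB a x) x₁]; exact h2.symm⟩
  -- b ∣ x₁ * y
  have hbxy : b ∣ x₁ * y := by
    obtain ⟨c, hc⟩ := h
    refine ⟨c, mul_left_cancel₀ hgne ?_⟩
    calc g * (x₁ * y) = x * y := by rw [hx₁]; ring
      _ = a * c := hc
      _ = g * (b * c) := by rw [hb]; ring
  have hby : b ∣ y := hco.dvd_of_dvd_mul_left hbxy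
  have hbgcd : b ∣ gcd a y := dvd_gcd ⟨g, by rw [hb, mul_comm]⟩ hby
  calc a = g * b := hb
    _ ∣ g * gcd a y := mul_dvd_mul_left g hbgcd
    _ = gcd a x * gcd a y := by rw [hg]

/-- The norm of `gcd m z` is `m`, when `norm z = m*n` with `m, n` coprime. -/
lemma norm_gcd {m n : ℕ} (hm : 0 < m) (h : Nat.Coprime m n) {z : GI}
    (hz : z.norm = (m : ℤ) * n) : (gcd (m : GI) z).norm = m := by
  set d := gcd (m : GI) z with hd
  have hdm : d ∣ (m : GI) := gcd_dvd_left _ _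
  have hdz : d ∣ z := gcd_dvd_right _ _
  have hmne : (m : GI) ≠ 0 := Nat.cast_ne_zero.mpr hm.ne'
  -- Step 1: norm d ∣ m
  have h1 : d.norm ∣ (m : ℤ) * n := hz ▸ dvd_norm hdz
  have h2 : d.norm ∣ (m : ℤ) * m := by
    have := dvd_norm hdm
    rwa [Zsqrtd.norm_natCast] at this
  have h3 : d.norm ∣ (m : ℤ) := by
    have hg : d.norm ∣ ((m : ℤ) * n).gcd ((m : ℤ) * m) := Int.dvd_coe_gcd h1 h2
    rwa [Int.gcd_mul_left, Int.gcd_natCast_natCast, Nat.coprime_comm.mp h,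
      mul_one, Int.natAbs_natCast] at hg
  -- Step 2: m ∣ norm d
  have key : (m : GI) ∣ z * star z := by
    have : ((z.norm : ℤ) : GI) = z * star z := Zsqrtd.norm_eq_mul_conj z
    rw [← this, hz]
    push_cast
    exact Dvd.intro _ rfl
  have key2 : (m : GI) ∣ gcd (m : GI) z * gcd (m : GI) (star z) :=
    dvd_gcd_mul_gcd hmne key
  have h4 : gcd (m : GI) (star z) ∣ star d := by
    have ha : star (gcd (m : GI) (star z)) ∣ (m : GI) := by
      have := star_dvd (gcd_dvd_left (m : GI) (star z))
      rwa [star_natCast] at this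
    have hb : star (gcd (m : GI) (star z)) ∣ z := by
      have := star_dvd (gcd_dvd_right (m : GI) (star z))
      rwa [star_star] at this
    have := star_dvd (dvd_gcd ha hb)
    rwa [star_star] at this
  have h5 : (m : GI) ∣ d * star d := key2.trans (mul_dvd_mul_left d h4)
  have h6 : (m : ℤ) ∣ d.norm := by
    have : ((d.norm : ℤ) : GI) = d * star d := Zsqrtd.norm_eq_mul_conj d
    rw [← this] at h5
    have := (Zsqrtd.intCast_dvd_intCast (m : ℤ) d.norm).mp (by push_cast at h5 ⊢; exact h5)
    exact this
  exact Int.dvd_antisymm (GaussianInt.norm_nonneg d) (by positivity) h3 h6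

lemma Sfin (n : ℕ) : (S n).Finite := by
  apply Set.Finite.subset (Set.Finite.image (f := fun p : ℤ × ℤ => (⟨p.1, p.2⟩ : GI))
    ((Set.finite_Icc (-(n : ℤ)) n).prod (Set.finite_Icc (-(n : ℤ)) n)))
  intro z hz
  have h : z.re ^ 2 + z.im ^ 2 = (n : ℤ) := by rw [← norm_def']; exact hz
  have hn : (0 : ℤ) ≤ n := Int.natCast_nonneg n
  refine ⟨(z.re, z.im), ⟨⟨?_, ?_⟩, ⟨?_, ?_⟩⟩, by ext <;> rfl⟩ <;>
    nlinarith [sq_nonneg z.re, sq_nonneg z.im, sq_nonneg (z.re - 1), sq_nonneg (z.re + 1),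
      sq_nonneg (z.im - 1), sq_nonneg (z.im + 1)]

lemma Afin (n : ℕ) : (A n).Finite := by
  apply Set.Finite.subset ((Set.finite_Icc (-(n : ℤ)) n).prod (Set.finite_Icc (-(n : ℤ)) n))
  intro p hp
  have h : (n : ℤ) = p.1 ^ 2 + 4 * p.2 ^ 2 := hp
  have hn : (0 : ℤ) ≤ n := Int.natCast_nonneg n
  refine ⟨⟨?_, ?_⟩, ⟨?_, ?_⟩⟩ <;>
    nlinarith [sq_nonneg p.1, sq_nonneg p.2, sq_nonneg (p.1 - 1), sq_nonneg (p.1 + 1),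
      sq_nonneg (p.2 - 1), sq_nonneg (p.2 + 1)]

lemma ncard_prod {α β : Type*} (s : Set α) (t : Set β) :
    (s ×ˢ t).ncard = s.ncard * t.ncard := by
  rw [← Nat.card_coe_set_eq, ← Nat.card_coe_set_eq, ← Nat.card_coe_set_eq,
    Nat.card_congr (Equiv.Set.prod s t), Nat.card_prod]

lemma ncard_bijOn {α β : Type*} {s : Set α} {t : Set β} {f : α → β}
    (h : Set.BijOn f s t) : s.ncard = t.ncard := by
  rw [← h.image_eq, Set.ncard_image_of_injOn h.injOn]

/-- The core multiplicativity: `4 · #S(mn) = #S(m) · #S(n)` for coprime `m, n ≥ 1`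
    (stated with `#S 1` in place of `4`). -/
lemma core {m n : ℕ} (hm : 0 < m) (hn : 0 < n) (h : Nat.Coprime m n) :
    (S 1).ncard * (S (m * n)).ncard = (S m).ncard * (S n).ncard := by
  rw [← ncard_prod, ← ncard_prod]
  apply ncard_bijOn (f := fun q : GI × GI =>
    (q.1 * gcd (m : GI) q.2, star q.1 * (q.2 / gcd (m : GI) q.2)))
  have hmz : (m : ℤ) ≠ 0 := Int.natCast_ne_zero.mpr hm.ne'
  constructor
  · -- MapsTo
    rintro ⟨z₀, z⟩ ⟨hz₀, hz⟩
    have hz₀1 : z₀.norm = 1 := by simpa [S] using hz₀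
    have hzn : z.norm = (m : ℤ) * n := by
      have : z.norm = ((m * n : ℕ) : ℤ) := hz
      rwa [Nat.cast_mul] at this
    set d := gcd (m : GI) z with hd
    have hnd : d.norm = m := norm_gcd hm h hzn
    have hdne : d ≠ 0 := by
      intro h0
      rw [h0, Zsqrtd.norm_zero] at hnd
      exact hmz hnd.symm
    have hdvd : d ∣ z := gcd_dvd_right _ _
    have hcancel : d * (z / d) = z := EuclideanDomain.mul_div_cancel' hdne hdvd
    have hnq : (z / d).norm = n := by
      have : d.norm * (z / d).norm = (m : ℤ) * n := by
        rw [← Zsqrtd.norm_mul, hcancel, hzn]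
      rw [hnd] at this
      exact mul_left_cancel₀ hmz this
    constructor
    · show (z₀ * d).norm = ((m : ℕ) : ℤ)
      rw [Zsqrtd.norm_mul, hz₀1, one_mul, hnd]
    · show (star z₀ * (z / d)).norm = ((n : ℕ) : ℤ)
      rw [Zsqrtd.norm_mul, Zsqrtd.norm_conj, hz₀1, one_mul, hnq]
  constructor
  · -- InjOn
    rintro ⟨z₀, z⟩ ⟨hz₀, hz⟩ ⟨w₀, w⟩ ⟨hw₀, hw⟩ heq
    have hz₀1 : z₀.norm = 1 := by simpa [S] using hz₀
    have hw₀1 : w₀.norm = 1 := by simpa [S] using hw₀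
    have hzn : z.norm = (m : ℤ) * n := by
      have : z.norm = ((m * n : ℕ) : ℤ) := hz
      rwa [Nat.cast_mul] at this
    have hwn : w.norm = (m : ℤ) * n := by
      have : w.norm = ((m * n : ℕ) : ℤ) := hw
      rwa [Nat.cast_mul] at this
    have h1 : z₀ * gcd (m : GI) z = w₀ * gcd (m : GI) w := congrArg Prod.fst heq
    have h2 : star z₀ * (z / gcd (m : GI) z) = star w₀ * (w / gcd (m : GI) w) :=
      congrArg Prod.snd heq
    have hdz : gcd (m : GI) z ∣ z := gcd_dvd_right _ _
    have hdw : gcd (m : GI) w ∣ w := gcd_dvd_right _ _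
    have hdzne : gcd (m : GI) z ≠ 0 := by
      intro h0
      have := norm_gcd hm h hzn
      rw [h0, Zsqrtd.norm_zero] at this
      exact hmz this.symm
    have hdwne : gcd (m : GI) w ≠ 0 := by
      intro h0
      have := norm_gcd hm h hwn
      rw [h0, Zsqrtd.norm_zero] at this
      exact hmz this.symm
    have hcz : gcd (m : GI) z * (z / gcd (m : GI) z) = z :=
      EuclideanDomain.mul_div_cancel' hdzne hdz
    have hcw : gcd (m : GI) w * (w / gcd (m : GI) w) = w :=
      EuclideanDomain.mul_div_cancel' hdwne hdw
    have hz₀u : z₀ * star z₀ = 1 := by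
      have := (Zsqrtd.norm_eq_mul_conj z₀).symm
      rw [hz₀1] at this
      exact_mod_cast this
    have hw₀u : w₀ * star w₀ = 1 := by
      have := (Zsqrtd.norm_eq_mul_conj w₀).symm
      rw [hw₀1] at this
      exact_mod_cast this
    have hzw : z = w := by
      calc z = (z₀ * star z₀) * (gcd (m : GI) z * (z / gcd (m : GI) z)) := by
              rw [hz₀u, hcz, one_mul]
        _ = (z₀ * gcd (m : GI) z) * (star z₀ * (z / gcd (m : GI) z)) := by ring
        _ = (w₀ * gcd (m : GI) w) * (star w₀ * (w / gcd (m : GI) w)) := by rw [h1, h2]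
        _ = (w₀ * star w₀) * (gcd (m : GI) w * (w / gcd (m : GI) w)) := by ring
        _ = w := by rw [hw₀u, hcw, one_mul]
    have hz₀w₀ : z₀ = w₀ := by
      rw [hzw] at h1
      exact mul_right_cancel₀ hdwne h1
    rw [Prod.mk.injEq]
    exact ⟨hz₀w₀, hzw⟩
  · -- SurjOn
    rintro ⟨w₁, w₂⟩ ⟨hw₁, hw₂⟩
    have hw₁n : w₁.norm = (m : ℤ) := hw₁
    have hw₂n : w₂.norm = (n : ℤ) := hw₂
    set z := w₁ * w₂ with hzdef
    have hzn : z.norm = (m : ℤ) * n := by rw [Zsqrtd.norm_mul, hw₁n, hw₂n]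
    set d := gcd (m : GI) z with hd
    have hnd : d.norm = m := norm_gcd hm h hzn
    have hdne : d ≠ 0 := by
      intro h0
      rw [h0, Zsqrtd.norm_zero] at hnd
      exact hmz hnd.symm
    -- w₁ ∣ d
    have hw₁m : w₁ ∣ (m : GI) := by
      refine ⟨star w₁, ?_⟩
      have := Zsqrtd.norm_eq_mul_conj w₁
      rw [hw₁n] at this
      exact_mod_cast this
    have hw₁d : w₁ ∣ d := dvd_gcd hw₁m (Dvd.intro _ rfl)
    -- d ∣ w₁ : via coprimality of d with w₂
    have hdz : d ∣ z := gcd_dvd_right _ _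
    have hdm : d ∣ (m : GI) := gcd_dvd_left _ _
    have hco : IsCoprime d w₂ := by
      set e := gcd d w₂ with he
      have hem : e ∣ (m : GI) := (gcd_dvd_left d w₂).trans hdm
      have hew : e ∣ w₂ := gcd_dvd_right d w₂
      have hne1 : e.norm ∣ (m : ℤ) * m := by
        have := dvd_norm hem
        rwa [Zsqrtd.norm_natCast] at this
      have hne2 : e.norm ∣ (n : ℤ) := hw₂n ▸ dvd_norm hew
      have hcop2 : Nat.Coprime (m * m) n := (h.mul h)
      have hne3 : e.norm ∣ 1 := by
        have hg : e.norm ∣ ((m : ℤ) * m).gcd (n : ℤ) := Int.dvd_coe_gcd hne1 hne2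
        have : ((m : ℤ) * m).gcd (n : ℤ) = 1 := by
          have : ((m * m : ℕ) : ℤ).gcd ((n : ℕ) : ℤ) = 1 := by
            rw [Int.gcd_natCast_natCast]
            exact hcop2
          rwa [Nat.cast_mul] at this
        rwa [this] at hg
      have hnorm1 : e.norm = 1 := Int.eq_one_of_dvd_one (GaussianInt.norm_nonneg e) hne3
      have heu : e * star e = 1 := by
        have := Zsqrtd.norm_eq_mul_conj e
        rw [hnorm1] at this
        exact_mod_cast this.symm
      have hbez := EuclideanDomain.gcd_eq_gcd_ab d w₂
      refine ⟨gcdA d w₂ * star e, gcdB d w₂ * star e, ?_⟩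
      calc gcdA d w₂ * star e * d + gcdB d w₂ * star e * w₂
          = (d * gcdA d w₂ + w₂ * gcdB d w₂) * star e := by ring
        _ = e * star e := by rw [← hbez, he]
        _ = 1 := heu
    have hdw₁ : d ∣ w₁ := hco.dvd_of_dvd_mul_right hdz
    -- get the unit c
    obtain ⟨c, hc⟩ := hdw₁
    have hcnorm : c.norm = 1 := by
      have : w₁.norm = d.norm * c.norm := by rw [hc, Zsqrtd.norm_mul]
      rw [hw₁n, hnd] at this
      have := this.symm
      nlinarith [this]
    refine ⟨(c, z), ⟨?_, ?_⟩, ?_⟩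
    · show c.norm = ((1 : ℕ) : ℤ)
      simpa using hcnorm
    · show z.norm = ((m * n : ℕ) : ℤ)
      rw [hzn]; push_cast; ring
    · -- value check
      have hcancel : d * (z / d) = z := EuclideanDomain.mul_div_cancel' hdne hdz
      have hdiveq : z / d = c * w₂ := by
        apply mul_left_cancel₀ hdne
        rw [hcancel, hzdef, hc]
        ring
      have hcu : c * star c = 1 := by
        have := Zsqrtd.norm_eq_mul_conj c
        rw [hcnorm] at this
        exact_mod_cast this.symm
      show (c * d, star c * (z / d)) = (w₁, w₂)
      rw [Prod.mk.injEq]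
      constructor
      · rw [hc]; ring
      · rw [hdiveq]
        calc star c * (c * w₂) = (c * star c) * w₂ := by ring
          _ = w₂ := by rw [hcu, one_mul]

lemma S_one_card : (S 1).ncard = 4 := by
  have hset : S 1 = {⟨1, 0⟩, ⟨-1, 0⟩, ⟨0, 1⟩, ⟨0, -1⟩} := by
    ext z
    obtain ⟨a, b⟩ := z
    simp only [S, Set.mem_setOf_eq, Set.mem_insert_iff, Set.mem_singleton_iff, Zsqrtd.ext_iff]
    constructor
    · intro hz
      have h : a ^ 2 + b ^ 2 = 1 := by
        rw [norm_def'] at hz; exact_mod_cast hz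
      have h1 : -1 ≤ a := by nlinarith [sq_nonneg b]
      have h2 : a ≤ 1 := by nlinarith [sq_nonneg b]
      have h3 : -1 ≤ b := by nlinarith [sq_nonneg a]
      have h4 : b ≤ 1 := by nlinarith [sq_nonneg a]
      interval_cases a <;> interval_cases b <;> simp_all
    · rintro (⟨rfl, rfl⟩ | ⟨rfl, rfl⟩ | ⟨rfl, rfl⟩ | ⟨rfl, rfl⟩) <;> (rw [norm_def']; norm_num)
  have hfs : ({⟨1, 0⟩, ⟨-1, 0⟩, ⟨0, 1⟩, ⟨0, -1⟩} : Set GI) =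
      ↑({⟨1, 0⟩, ⟨-1, 0⟩, ⟨0, 1⟩, ⟨0, -1⟩} : Finset GI) := by simp
  rw [hset, hfs, Set.ncard_coe_finset]
  decide

/-- Odd case: `2 · #A n = #S n`. -/
lemma odd_rel {n : ℕ} (hodd : Odd n) : 2 * (A n).ncard = (S n).ncard := by
  classical
  set T₀ : Set GI := {z | z.norm = (n : ℤ) ∧ Even z.im} with hT₀
  set T₁ : Set GI := {z | z.norm = (n : ℤ) ∧ ¬ Even z.im} with hT₁
  have hsplit : S n = T₀ ∪ T₁ := by
    ext z
    simp only [S, hT₀, hT₁, Set.mem_union, Set.mem_setOf_eq]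
    tauto
  have hdisj : Disjoint T₀ T₁ := by
    rw [Set.disjoint_iff]
    rintro z ⟨⟨_, h0⟩, ⟨_, h1⟩⟩
    exact absurd h0 h1
  have hfin : (S n).Finite := Sfin n
  have hfin0 : T₀.Finite := hfin.subset (by rw [hsplit]; exact Set.subset_union_left)
  have hfin1 : T₁.Finite := hfin.subset (by rw [hsplit]; exact Set.subset_union_right)
  -- A n ≃ T₀ via (x,y) ↦ ⟨x, 2y⟩
  have hA : (A n).ncard = T₀.ncard := by
    apply ncard_bijOn (f := fun p : ℤ × ℤ => (⟨p.1, 2 * p.2⟩ : GI))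
    refine ⟨?_, ?_, ?_⟩
    · rintro ⟨x, y⟩ hp
      have h : (n : ℤ) = x ^ 2 + 4 * y ^ 2 := hp
      exact ⟨by rw [norm_def']; simpa using by linarith [h], ⟨y, by simp; ring⟩⟩
    · rintro ⟨x, y⟩ _ ⟨x', y'⟩ _ heq
      have h1 : x = x' := congrArg Zsqrtd.re heq
      have h2 : 2 * y = 2 * y' := congrArg Zsqrtd.im heq
      simp only [Prod.mk.injEq]
      omega
    · rintro z ⟨hz, ⟨y, hy⟩⟩
      refine ⟨(z.re, y), ?_, ?_⟩
      · show (n : ℤ) = z.re ^ 2 + 4 * y ^ 2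
        rw [← hz, norm_def', hy]; ring
      · ext <;> simp [hy]; omega
  -- T₁ ≃ T₀ via swap
  have hswap : T₁.ncard = T₀.ncard := by
    have hnodd : Odd (n : ℤ) := Int.odd_coe_nat n |>.mpr hodd
    apply ncard_bijOn (f := fun z : GI => (⟨z.im, z.re⟩ : GI))
    refine ⟨?_, ?_, ?_⟩
    · rintro z ⟨hz, him⟩
      have hn' : z.re ^ 2 + z.im ^ 2 = (n : ℤ) := by rw [← norm_def']; exact hz
      have hre : Even z.re := by
        by_contra hre
        have h1 : Odd (z.re ^ 2) := (Int.odd_pow' (by norm_num)).mpr (Int.not_even_iff_odd.mp hre)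
        have h2 : Odd (z.im ^ 2) := (Int.odd_pow' (by norm_num)).mpr (Int.not_even_iff_odd.mp him)
        have : Even ((n : ℤ)) := hn' ▸ h1.add_odd h2
        exact (Int.not_odd_iff_even.mpr this) hnodd
      exact ⟨by rw [norm_def'] at hz ⊢; simpa using by linarith [hz, hn'], hre⟩
    · rintro z _ w _ heq
      have h1 : z.im = w.im := congrArg Zsqrtd.re heq
      have h2 : z.re = w.re := congrArg Zsqrtd.im heq
      ext <;> assumption
    · rintro z ⟨hz, him⟩
      refine ⟨⟨z.im, z.re⟩, ⟨?_, ?_⟩, by ext <;> rfl⟩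
      · rw [norm_def'] at hz ⊢; simpa using by linarith [hz]
      · -- im of ⟨z.im, z.re⟩ is z.re, must be odd
        show ¬ Even z.re
        intro hre
        have hn' : z.re ^ 2 + z.im ^ 2 = (n : ℤ) := by rw [← norm_def']; exact hz
        have h1 : Even (z.re ^ 2) := (Int.even_pow' (by norm_num)).mpr hre
        have h2 : Even (z.im ^ 2) := (Int.even_pow' (by norm_num)).mpr him
        have : Even ((n : ℤ)) := hn' ▸ h1.add h2
        exact (Int.not_odd_iff_even.mpr this) (Int.odd_coe_nat n |>.mpr hodd)
  rw [hsplit, Set.ncard_union_eq hdisj hfin0 hfin1, hA, hswap]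
  ring

/-- Divisible-by-4 case: `#A (4k) = #S k`. -/
lemma four_rel (k : ℕ) : (A (4 * k)).ncard = (S k).ncard := by
  symm
  apply ncard_bijOn (f := fun z : GI => ((2 * z.re, z.im) : ℤ × ℤ))
  refine ⟨?_, ?_, ?_⟩
  · intro z hz
    show ((4 * k : ℕ) : ℤ) = (2 * z.re) ^ 2 + 4 * z.im ^ 2
    have h : z.re ^ 2 + z.im ^ 2 = (k : ℤ) := by rw [← norm_def']; exact hz
    push_cast
    linarith [h]
  · intro z _ w _ heq
    have h1 : 2 * z.re = 2 * w.re := congrArg Prod.fst heq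
    have h2 : z.im = w.im := congrArg Prod.snd heq
    ext
    · omega
    · exact h2
  · rintro ⟨x, y⟩ hp
    have h : ((4 * k : ℕ) : ℤ) = x ^ 2 + 4 * y ^ 2 := hp
    have hx : Even x := by
      by_contra hx
      have h1 : Odd (x ^ 2) := (Int.odd_pow' (by norm_num)).mpr (Int.not_even_iff_odd.mp hx)
      have h2 : Even ((4 * k : ℕ) : ℤ) := by push_cast; exact ⟨2 * k, by ring⟩
      rw [h] at h2
      have : Even (x ^ 2) := by
        have h4 : Even ((4 : ℤ) * y ^ 2) := ⟨2 * y ^ 2, by ring⟩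
        rcases h2 with ⟨t, ht⟩
        rcases h4 with ⟨u, hu⟩
        exact ⟨t - u, by linarith⟩
      exact (Int.not_odd_iff_even.mpr this) h1
    obtain ⟨s, hs⟩ := hx
    refine ⟨⟨s, y⟩, ?_, ?_⟩
    · show Zsqrtd.norm ⟨s, y⟩ = (k : ℤ)
      rw [norm_def']
      have : ((4 : ℤ) * k) = (s + s) ^ 2 + 4 * y ^ 2 := by push_cast at h; rw [hs] at h; linarith
      simp only []
      nlinarith [this]
    · show ((2 * s, y) : ℤ × ℤ) = (x, y)
      rw [Prod.mk.injEq]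
      exact ⟨by omega, rfl⟩

/-- `n ≡ 2 (mod 4)`: no representations. -/
lemma two_rel {n : ℕ} (hn : n % 4 = 2) : A n = ∅ := by
  ext ⟨x, y⟩
  simp only [A, Set.mem_setOf_eq, Set.mem_empty_iff_false, iff_false]
  intro h
  have hmod : (n : ℤ) % 4 = 2 := by omega
  rcases Int.even_or_odd x with ⟨s, hs⟩ | ⟨s, hs⟩
  · have : (n : ℤ) = 4 * (s * s + y ^ 2) := by rw [h, hs]; ring
    omega
  · have : (n : ℤ) = 4 * (s * s + s + y ^ 2) + 1 := by rw [h, hs]; ring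
    omega

lemma r_eq (n : ℕ) : r n = ((A n).ncard : ℝ) / 2 := rfl

lemma A_one_card : (A 1).ncard = 2 := by
  have hset : A 1 = {((1 : ℤ), (0 : ℤ)), ((-1 : ℤ), (0 : ℤ))} := by
    ext ⟨x, y⟩
    simp only [A, Set.mem_setOf_eq, Set.mem_insert_iff, Set.mem_singleton_iff, Prod.mk.injEq]
    constructor
    · intro h
      have h' : x ^ 2 + 4 * y ^ 2 = 1 := by exact_mod_cast h.symm
      have h1 : -1 ≤ x := by nlinarith [sq_nonneg y]
      have h2 : x ≤ 1 := by nlinarith [sq_nonneg y]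
      have h3 : y = 0 := by nlinarith [sq_nonneg x, sq_nonneg y]
      subst h3
      interval_cases x <;> simp_all
    · rintro (⟨rfl, rfl⟩ | ⟨rfl, rfl⟩) <;> norm_num
  rw [hset, Set.ncard_pair (by norm_num)]

/-- Even case of multiplicativity: `m` odd, `n` even. -/
lemma even_case (m n : ℕ) (hm : 0 < m) (hn : 0 < n) (hcop : Nat.Coprime m n)
    (hmo : Odd m) (hne : Even n) : r (m * n) = r m * r n := by
  have h24 : n % 4 = 0 ∨ n % 4 = 2 := by
    have := Nat.even_iff.mp hne; omega
  rcases h24 with h4 | h4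
  · -- n = 4 n'
    obtain ⟨n', hn'⟩ : ∃ n', n = 4 * n' := ⟨n / 4, by omega⟩
    have hn'pos : 0 < n' := by omega
    have hcop' : Nat.Coprime m n' :=
      Nat.Coprime.coprime_dvd_right ⟨4, by omega⟩ hcop
    have key := core hm hn'pos hcop'
    rw [S_one_card] at key
    have c1 : (4 : ℝ) * ((S (m * n')).ncard : ℝ) =
        ((S m).ncard : ℝ) * ((S n').ncard : ℝ) := by exact_mod_cast key
    have c2 : (2 : ℝ) * ((A m).ncard : ℝ) = ((S m).ncard : ℝ) := by
      exact_mod_cast odd_rel hmo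
    have c3 : ((A n).ncard : ℝ) = ((S n').ncard : ℝ) := by
      rw [hn']; exact_mod_cast four_rel n'
    have c4 : ((A (m * n)).ncard : ℝ) = ((S (m * n')).ncard : ℝ) := by
      rw [show m * n = 4 * (m * n') by rw [hn']; ring]
      exact_mod_cast four_rel (m * n')
    rw [r_eq, r_eq, r_eq, c4]
    rw [← c2, ← c3] at c1
    linear_combination (1 / 8 : ℝ) * c1
  · -- n ≡ 2 mod 4 : both sides vanish
    have hAn : A n = ∅ := two_rel h4
    have hAmn : A (m * n) = ∅ := by
      apply two_rel
      obtain ⟨s, hs⟩ := hmo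
      obtain ⟨t, ht⟩ : ∃ t, n = 4 * t + 2 := ⟨n / 4, by omega⟩
      have : m * n = 4 * (2 * s * t + s + t) + 2 := by rw [hs, ht]; ring
      omega
    rw [r_eq, r_eq, r_eq, hAn, hAmn]
    simp

/-- Odd case of multiplicativity. -/
lemma odd_case (m n : ℕ) (hm : 0 < m) (hn : 0 < n) (hcop : Nat.Coprime m n)
    (hmo : Odd m) (hno : Odd n) : r (m * n) = r m * r n := by
  have key := core hm hn hcop
  rw [S_one_card] at key
  have c1 : (4 : ℝ) * ((S (m * n)).ncard : ℝ) =
      ((S m).ncard : ℝ) * ((S n).ncard : ℝ) := by exact_mod_cast key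
  have c2 : (2 : ℝ) * ((A m).ncard : ℝ) = ((S m).ncard : ℝ) := by
    exact_mod_cast odd_rel hmo
  have c3 : (2 : ℝ) * ((A n).ncard : ℝ) = ((S n).ncard : ℝ) := by
    exact_mod_cast odd_rel hno
  have c4 : (2 : ℝ) * ((A (m * n)).ncard : ℝ) = ((S (m * n)).ncard : ℝ) := by
    exact_mod_cast odd_rel (hmo.mul hno)
  rw [r_eq, r_eq, r_eq]
  rw [← c2, ← c3, ← c4] at c1
  linear_combination (1 / 16 : ℝ) * c1

end Stmt2Aux

open Stmt2Aux in
/-- `r` is multiplicative: `r 1 = 1` and `r (m n) = r m · r n` for coprime `m, n ≥ 1`. -/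
theorem stmt2 :
    r 1 = 1 ∧
      ∀ m n : ℕ, 0 < m → 0 < n → Nat.Coprime m n → r (m * n) = r m * r n := by
  constructor
  · rw [r_eq, A_one_card]
    norm_num
  · intro m n hm hn hcop
    rcases Nat.even_or_odd m with hme | hmo
    · rcases Nat.even_or_odd n with hne | hno
      · exfalso
        have h2 : 2 ∣ Nat.gcd m n := Nat.dvd_gcd hme.two_dvd hne.two_dvd
        rw [hcop] at h2
        omega
      · rw [show m * n = n * m from Nat.mul_comm m n,
          even_case n m hn hm hcop.symm hno hme, mul_comm]
    · rcases Nat.even_or_odd n with hne | hno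
      · exact even_case m n hm hn hcop hmo hne
      · exact odd_case m n hm hn hcop hmo hno
end

section
/- For positive integers M and ℓ, r^{(M)}(ℓ²) = #{(a,n) ∈ ℤ_{>0}² : a | n², gcd(n,M) = 1, a + n²/a = ℓ} + δ, where δ = 1 if M = 1 and δ = 0 if M > 1, and r^{(M)}(k) = (1/2)·#{(x,y) ∈ ℤ² : k = x² + 4y², gcd(y,M) = 1}. -/
/-- `r^{(M)}(k) = (1/2) · #{(x, y) ∈ ℤ² : k = x² + 4y², gcd(y, M) = 1}`. -/
noncomputable def rM (M k : ℕ) : ℚ :=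
  (Set.ncard {p : ℤ × ℤ | (k : ℤ) = p.1 ^ 2 + 4 * p.2 ^ 2 ∧ Int.gcd p.2 M = 1} : ℚ) / 2

/-- For positive integers `M, ℓ`:
`r^{(M)}(ℓ²) = #{(a, n) ∈ ℤ_{>0}² : a ∣ n², gcd(n, M) = 1, a + n²/a = ℓ} + δ_{M=1}`. -/
theorem stmt5 (M ℓ : ℕ) (hM : 0 < M) (hℓ : 0 < ℓ) :
    rM M (ℓ ^ 2) =
      (Set.ncard {q : ℕ × ℕ | 0 < q.1 ∧ 0 < q.2 ∧ q.1 ∣ q.2 ^ 2 ∧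
          Nat.Coprime q.2 M ∧ q.1 + q.2 ^ 2 / q.1 = ℓ} : ℚ) +
        (if M = 1 then 1 else 0) := by
  classical
  have hl : (0:ℤ) < (ℓ:ℤ) := by exact_mod_cast hℓ
  set S : Set (ℤ × ℤ) :=
    {p : ℤ × ℤ | ((ℓ ^ 2 : ℕ) : ℤ) = p.1 ^ 2 + 4 * p.2 ^ 2 ∧ Int.gcd p.2 M = 1} with hSdef
  set T : Set (ℕ × ℕ) :=
    {q : ℕ × ℕ | 0 < q.1 ∧ 0 < q.2 ∧ q.1 ∣ q.2 ^ 2 ∧ Nat.Coprime q.2 M ∧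
      q.1 + q.2 ^ 2 / q.1 = ℓ} with hTdef
  have hSmem : ∀ p : ℤ × ℤ,
      p ∈ S ↔ ((ℓ:ℤ)^2 = p.1 ^ 2 + 4 * p.2 ^ 2 ∧ Int.gcd p.2 M = 1) := by
    intro p
    simp only [hSdef, Set.mem_setOf_eq, Nat.cast_pow]
  -- finiteness of S
  have hSfin : S.Finite := by
    apply Set.Finite.subset ((Set.finite_Icc (-(ℓ:ℤ)) ℓ).prod (Set.finite_Icc (-(ℓ:ℤ)) ℓ))
    rintro ⟨x, y⟩ hp
    obtain ⟨h1, -⟩ := (hSmem _).1 hp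
    simp only [Set.mem_prod, Set.mem_Icc]
    constructor
    · constructor <;> nlinarith [sq_nonneg y, sq_nonneg (x - ℓ), sq_nonneg (x + ℓ)]
    · constructor <;> nlinarith [sq_nonneg x, sq_nonneg (y - ℓ), sq_nonneg (y + ℓ)]
  -- finiteness of T
  have hTfin : T.Finite := by
    apply Set.Finite.subset ((Set.finite_Icc 0 ℓ).prod (Set.finite_Icc 0 (ℓ ^ 2)))
    rintro ⟨a, n⟩ ⟨ha, hn, hd, hc, he⟩
    simp only [Set.mem_prod, Set.mem_Icc]
    have h1 : a ≤ ℓ := le_trans (Nat.le_add_right _ _) he.le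
    have h2 : n ^ 2 = a * (n ^ 2 / a) := (Nat.mul_div_cancel' hd).symm
    have h3 : n ^ 2 / a ≤ ℓ := le_trans (Nat.le_add_left _ _) he.le
    have hnl : n ≤ ℓ ^ 2 := by
      calc n ≤ n ^ 2 := Nat.le_self_pow two_ne_zero n
        _ = a * (n ^ 2 / a) := h2
        _ ≤ ℓ * ℓ := Nat.mul_le_mul h1 h3
        _ = ℓ ^ 2 := (sq ℓ).symm
    exact ⟨⟨Nat.zero_le _, h1⟩, ⟨Nat.zero_le _, hnl⟩⟩
  -- the pieces of S
  set A : Set (ℤ × ℤ) := {p ∈ S | p.2 = 0} with hAdef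
  set Bp : Set (ℤ × ℤ) := {p ∈ S | 0 < p.2} with hBpdef
  set Bm : Set (ℤ × ℤ) := {p ∈ S | p.2 < 0} with hBmdef
  have hAfin : A.Finite := hSfin.subset (Set.sep_subset _ _)
  have hBpfin : Bp.Finite := hSfin.subset (Set.sep_subset _ _)
  have hBmfin : Bm.Finite := hSfin.subset (Set.sep_subset _ _)
  -- the map from T to Bp
  set f : ℕ × ℕ → ℤ × ℤ := fun q => ((ℓ:ℤ) - 2 * q.1, (q.2 : ℤ)) with hfdef
  have hBp_eq : Bp = f '' T := by
    ext ⟨x, y⟩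
    constructor
    · rintro ⟨hpS, hy⟩
      obtain ⟨h1, hgcd⟩ := (hSmem _).1 hpS
      simp only at h1 hgcd hy
      -- x has the same parity as ℓ
      have hdvd : (2:ℤ) ∣ ((ℓ:ℤ) - x) := by
        have h2 : (2:ℤ) ∣ ((ℓ:ℤ) - x) * ((ℓ:ℤ) + x) := ⟨2 * y ^ 2, by linear_combination h1⟩
        rcases (Int.prime_two.dvd_mul.mp h2) with h | h
        · exact h
        · obtain ⟨c, hc⟩ := h
          exact ⟨c - x, by linarith⟩
      obtain ⟨b, hb⟩ := hdvd
      have hy1 : 1 ≤ y := hy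
      have hy2 : 1 ≤ y ^ 2 := by nlinarith
      have hxl : x < (ℓ:ℤ) := by nlinarith [sq_nonneg (x - ℓ), sq_nonneg (x + ℓ)]
      have hbpos : 0 < b := by linarith
      have hx : x = (ℓ:ℤ) - 2 * b := by linarith
      subst hx
      have h4 : 4 * y ^ 2 = 4 * (b * ((ℓ:ℤ) - b)) := by linear_combination -h1
      have hkey : y ^ 2 = b * ((ℓ:ℤ) - b) := by linarith
      have hbl : b ≤ (ℓ:ℤ) := by nlinarith
      -- move to ℕ
      refine ⟨(b.toNat, y.toNat), ?_, ?_⟩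
      · have hbt : ((b.toNat : ℤ)) = b := Int.toNat_of_nonneg hbpos.le
        have hyt : ((y.toNat : ℤ)) = y := Int.toNat_of_nonneg hy.le
        have haℓ : b.toNat ≤ ℓ := by omega
        have hmul : (y.toNat) ^ 2 = b.toNat * (ℓ - b.toNat) := by
          have : ((y.toNat ^ 2 : ℕ) : ℤ) = ((b.toNat * (ℓ - b.toNat) : ℕ) : ℤ) := by
            push_cast [haℓ]
            rw [hbt, hyt]
            linarith [hkey]
          exact_mod_cast this
        have hdvd' : b.toNat ∣ y.toNat ^ 2 := ⟨ℓ - b.toNat, hmul⟩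
        refine ⟨by omega, by omega, hdvd', ?_, ?_⟩
        · have hgy : Int.gcd ((y.toNat : ℤ)) ((M : ℤ)) = 1 := by rw [hyt]; exact hgcd
          rwa [Int.gcd_natCast_natCast] at hgy
        · rw [hmul, Nat.mul_div_cancel_left _ (by omega : 0 < b.toNat)]
          omega
      · simp only [hfdef]
        have hbt : ((b.toNat : ℤ)) = b := Int.toNat_of_nonneg hbpos.le
        have hyt : ((y.toNat : ℤ)) = y := Int.toNat_of_nonneg hy.le
        rw [Prod.ext_iff]
        constructor
        · simp only; rw [hbt]
        · simp only; rw [hyt]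
    · rintro ⟨⟨a, n⟩, ⟨ha, hn, hd, hc, he⟩, hfq⟩
      obtain ⟨c, hcc⟩ := hd
      have hce : a + c = ℓ := by
        rw [hcc, Nat.mul_div_cancel_left _ ha] at he
        exact he
      have hfx : ((ℓ:ℤ) - 2 * a) = x ∧ ((n:ℤ)) = y := by
        rw [Prod.ext_iff] at hfq
        exact hfq
      obtain ⟨hfx1, hfx2⟩ := hfx
      have hcc' : ((n:ℤ)) ^ 2 = (a:ℤ) * (c:ℤ) := by exact_mod_cast hcc
      have hce' : ((a:ℤ)) + (c:ℤ) = (ℓ:ℤ) := by exact_mod_cast hce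
      constructor
      · rw [hSmem]
        constructor
        · simp only
          rw [← hfx1, ← hfx2]
          linear_combination (-4 * (a:ℤ)) * hce' - 4 * hcc'
        · simp only
          rw [← hfx2]
          simpa [Int.gcd_natCast_natCast] using hc
      · simp only
        rw [← hfx2]
        exact_mod_cast hn
  have hfinj : Set.InjOn f T := by
    rintro ⟨a, n⟩ - ⟨a', n'⟩ - h
    simp only [hfdef, Prod.ext_iff] at h
    obtain ⟨h1, h2⟩ := h
    have : (a:ℤ) = a' := by linarith
    have ha : a = a' := by exact_mod_cast this
    have hn : n = n' := by exact_mod_cast h2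
    simp [ha, hn]
  have hcardBp : Bp.ncard = T.ncard := by
    rw [hBp_eq, Set.ncard_image_of_injOn hfinj]
  -- Bm is the reflection of Bp
  set g : ℤ × ℤ → ℤ × ℤ := fun p => (p.1, -p.2) with hgdef
  have hBm_eq : Bm = g '' Bp := by
    ext ⟨x, y⟩
    constructor
    · rintro ⟨hpS, hy⟩
      obtain ⟨h1, hgcd⟩ := (hSmem _).1 hpS
      refine ⟨(x, -y), ⟨(hSmem _).2 ⟨by simp only; linarith [h1, sq_abs y]; , by simpa using hgcd⟩, by simp only; linarith⟩, by simp [hgdef]⟩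
    · rintro ⟨⟨x', y'⟩, ⟨hpS, hy⟩, hgq⟩
      obtain ⟨h1, hgcd⟩ := (hSmem _).1 hpS
      simp only [hgdef, Prod.ext_iff] at hgq
      obtain ⟨hgx, hgy⟩ := hgq
      simp only at hgx hgy h1 hgcd hy
      constructor
      · rw [hSmem]
        constructor
        · simp only; rw [← hgx, ← hgy]; ring_nf; linarith [h1]
        · simp only; rw [← hgy]; simpa using hgcd
      · simp only; omega
  have hginj : Set.InjOn g Bp := by
    rintro ⟨x, y⟩ - ⟨x', y'⟩ - h
    simp only [hgdef, Prod.ext_iff] at h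
    obtain ⟨h1, h2⟩ := h
    simp [h1]; omega
  have hcardBm : Bm.ncard = Bp.ncard := by
    rw [hBm_eq, Set.ncard_image_of_injOn hginj]
  -- decomposition of S
  have hS_decomp : S = A ∪ (Bp ∪ Bm) := by
    ext ⟨x, y⟩
    constructor
    · intro hp
      rcases lt_trichotomy y 0 with h | h | h
      · exact Or.inr (Or.inr ⟨hp, h⟩)
      · exact Or.inl ⟨hp, h⟩
      · exact Or.inr (Or.inl ⟨hp, h⟩)
    · rintro (h | h | h) <;> exact h.1
  have hdisj1 : Disjoint A (Bp ∪ Bm) := by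
    rw [Set.disjoint_left]
    rintro ⟨x, y⟩ ⟨-, h0⟩ (⟨-, h⟩ | ⟨-, h⟩) <;> simp only at h0 h <;> omega
  have hdisj2 : Disjoint Bp Bm := by
    rw [Set.disjoint_left]
    rintro ⟨x, y⟩ ⟨-, h⟩ ⟨-, h'⟩
    simp only at h h'
    omega
  -- the cardinality of A
  have hcardA : A.ncard = if M = 1 then 2 else 0 := by
    by_cases hM1 : M = 1
    · have hA : A = {((ℓ:ℤ), 0), (-(ℓ:ℤ), 0)} := by
        ext ⟨x, y⟩
        constructor
        · rintro ⟨hpS, hy⟩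
          obtain ⟨h1, -⟩ := (hSmem _).1 hpS
          simp only at h1 hy
          subst hy
          have hx2 : ((x:ℤ) - ℓ) * ((x:ℤ) + ℓ) = 0 := by linear_combination -h1
          simp only [Set.mem_insert_iff, Set.mem_singleton_iff, Prod.mk.injEq]
          rcases mul_eq_zero.mp hx2 with h | h
          · left; exact ⟨by linarith, trivial⟩
          · right; exact ⟨by linarith, trivial⟩
        · rintro (h | h) <;> rw [h] <;>
            exact ⟨(hSmem _).2 ⟨by simp only; push_cast; ring, by simp [hM1]⟩, rfl⟩
      have hne : (((ℓ:ℤ)), (0:ℤ)) ≠ (-(ℓ:ℤ), (0:ℤ)) := by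
        intro h
        have h1 := congrArg Prod.fst h
        simp only at h1
        omega
      rw [hA, if_pos hM1, Set.ncard_pair hne]
    · have hA : A = ∅ := by
        ext ⟨x, y⟩
        simp only [Set.mem_empty_iff_false, iff_false]
        rintro ⟨hpS, hy⟩
        obtain ⟨-, hgcd⟩ := (hSmem _).1 hpS
        simp only at hy hgcd
        subst hy
        simp only [Int.gcd_zero_left, Int.natAbs_natCast] at hgcd
        omega
      rw [hA, if_neg hM1, Set.ncard_empty]
  -- total count
  have hcardS : S.ncard = (if M = 1 then 2 else 0) + (T.ncard + T.ncard) := by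
    rw [hS_decomp, Set.ncard_union_eq hdisj1 hAfin (hBpfin.union hBmfin),
      Set.ncard_union_eq hdisj2 hBpfin hBmfin, hcardA, hcardBp, hcardBm, hcardBp]
  -- finish
  rw [rM]
  have hSc : {p : ℤ × ℤ | ((ℓ ^ 2 : ℕ) : ℤ) = p.1 ^ 2 + 4 * p.2 ^ 2 ∧ Int.gcd p.2 M = 1} = S :=
    hSdef.symm
  rw [hSc, hcardS]
  by_cases hM1 : M = 1 <;> simp [hM1] <;> push_cast <;> ring
end

section
/- Let M be a squarefree positive integer, p a prime dividing M, and D a positive integer with D ≡ 0 or 1 (mod 4). Let d be the discriminant of ℚ(√D) (i.e., D = dℓ² with d fundamental). If the Kronecker symbol (d/p) ≠ 1, then ∑_{k=0}^∞ r^{(M)}(D p^{-2k}) = r^{(M/p)}(D). -/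
private lemma abs_le_of_sq_le {x m : ℤ} (hm : 0 ≤ m) (h : x ^ 2 ≤ m) : -m ≤ x ∧ x ≤ m := by
  constructor <;> nlinarith [sq_nonneg (x - 1), sq_nonneg (x + 1)]

private noncomputable def Afin (m M' : ℕ) : Finset (ℤ × ℤ) :=
  ((Finset.Icc (-(m : ℤ)) m) ×ˢ (Finset.Icc (-(m : ℤ)) m)).filter
    fun q => (m : ℤ) = q.1 ^ 2 + 4 * q.2 ^ 2 ∧ Int.gcd q.2 M' = 1

private lemma mem_Afin {m M' : ℕ} {q : ℤ × ℤ} :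
    q ∈ Afin m M' ↔ (m : ℤ) = q.1 ^ 2 + 4 * q.2 ^ 2 ∧ Int.gcd q.2 M' = 1 := by
  simp only [Afin, Finset.mem_filter, Finset.mem_product, Finset.mem_Icc]
  refine ⟨fun h => h.2, fun h => ⟨⟨?_, ?_⟩, h⟩⟩
  · exact abs_le_of_sq_le (by positivity) (by nlinarith [h.1, sq_nonneg q.2])
  · exact abs_le_of_sq_le (by positivity) (by nlinarith [h.1, sq_nonneg q.1])

private lemma rM_eq (M' m : ℕ) : rM M' m = ((Afin m M').card : ℚ) / 2 := by
  unfold rM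
  congr 2
  have : {p : ℤ × ℤ | (m : ℤ) = p.1 ^ 2 + 4 * p.2 ^ 2 ∧ Int.gcd p.2 M' = 1}
      = ↑(Afin m M') := by
    ext q; simp [mem_Afin, Set.mem_setOf_eq]
  rw [this, Set.ncard_coe_finset]

private lemma pow_cancel_le {p u v : ℤ} (hp : Prime p) {a b : ℕ} (hab : a ≤ b)
    (h : p ^ a * u = p ^ b * v) (hu : ¬ p ∣ u) : a = b ∧ u = v := by
  obtain ⟨c, rfl⟩ := Nat.exists_eq_add_of_le hab
  rw [pow_add, mul_assoc] at h
  have h2 : u = p ^ c * v := mul_left_cancel₀ (pow_ne_zero _ hp.ne_zero) h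
  rcases Nat.eq_zero_or_pos c with rfl | hc
  · refine ⟨by omega, by simpa using h2⟩
  · exact absurd (h2 ▸ dvd_mul_of_dvd_left (dvd_pow_self p hc.ne') v) hu

private lemma pow_cancel {p u v : ℤ} (hp : Prime p) {a b : ℕ}
    (h : p ^ a * u = p ^ b * v) (hu : ¬ p ∣ u) (hv : ¬ p ∣ v) : a = b ∧ u = v := by
  rcases le_total a b with hab | hab
  · exact pow_cancel_le hp hab h hu
  · obtain ⟨e1, e2⟩ := pow_cancel_le hp hab h.symm hv
    exact ⟨e1.symm, e2.symm⟩

private lemma exists_pow_mul {p : ℕ} (hp : p.Prime) {z : ℤ} (hz : z ≠ 0) :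
    ∃ j w, z = (p : ℤ) ^ j * w ∧ ¬ (p : ℤ) ∣ w := by
  obtain ⟨k, m, hm, hzn⟩ :=
    Nat.exists_eq_pow_mul_and_not_dvd (Int.natAbs_ne_zero.mpr hz) p hp.ne_one
  have hmz : ¬ (p : ℤ) ∣ (m : ℤ) := fun h => hm (Int.ofNat_dvd.mp h)
  rcases Int.natAbs_eq z with h | h
  · exact ⟨k, m, by rw [h, hzn]; push_cast; ring, hmz⟩
  · exact ⟨k, -m, by rw [h, hzn]; push_cast; ring, fun hd => hmz ((dvd_neg).mp hd)⟩

private lemma odd_sq_zmod8 {x : ℤ} (h : ¬ (2 : ℤ) ∣ x) : ((x : ZMod 8)) ^ 2 = 1 := by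
  obtain ⟨t, rfl⟩ : ∃ t, x = 2 * t + 1 := ⟨x / 2, by omega⟩
  have h8 : (8 : ℤ) ∣ 4 * (t * (t + 1)) := by
    obtain ⟨s, hs⟩ := Int.even_mul_succ_self t
    exact ⟨s, by omega⟩
  have h0 : ((4 * (t * (t + 1)) : ℤ) : ZMod 8) = 0 :=
    (ZMod.intCast_zmod_eq_zero_iff_dvd _ 8).mpr h8
  have he : ((2 * t + 1 : ℤ) : ZMod 8) ^ 2 = ((4 * (t * (t + 1)) : ℤ) : ZMod 8) + 1 := by
    push_cast; ring
  rw [he, h0, zero_add]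

private lemma zmod8_eq_of (a : ℤ) (h : ((a : ZMod 8)) = 1) : a % 8 = 1 := by
  have h1 : ((a - 1 : ℤ) : ZMod 8) = 0 := by push_cast; rw [h]; ring
  have h2 := (ZMod.intCast_zmod_eq_zero_iff_dvd _ 8).mp h1
  omega

private lemma E_zmod8 {x' y' : ℤ} {c : ℕ} (hc : 0 < c) (hx' : ¬ (2 : ℤ) ∣ x') :
    ((x' ^ 2 + 4 * (2 : ℤ) ^ (2 * c) * y' ^ 2 : ℤ) : ZMod 8) = 1 := by
  have h16 : ((4 * (2 : ℤ) ^ (2 * c) * y' ^ 2 : ℤ) : ZMod 8) = 0 := by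
    apply (ZMod.intCast_zmod_eq_zero_iff_dvd _ 8).mpr
    have h2c : (2 : ℤ) ^ (2 * c) = 2 * 2 ^ (2 * c - 1) := by
      rw [← pow_succ']; congr 1; omega
    exact Dvd.dvd.mul_right ⟨2 ^ (2 * c - 1), by rw [h2c]; ring⟩ _
  have he : ((x' ^ 2 + 4 * (2 : ℤ) ^ (2 * c) * y' ^ 2 : ℤ) : ZMod 8)
      = ((x' : ℤ) : ZMod 8) ^ 2 + ((4 * (2 : ℤ) ^ (2 * c) * y' ^ 2 : ℤ) : ZMod 8) := by
    push_cast; ring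
  rw [he, h16, add_zero, odd_sq_zmod8 hx']

private lemma key {p : ℕ} (hp : p.Prime) {d x' y' : ℤ} {c : ℕ} (hc : 0 < c)
    (hd : IsFundamentalDiscriminant d) (hdp : kronP d p ≠ 1)
    {ℓ : ℕ} (hl : 0 < ℓ) {j : ℕ} (hx' : ¬ (p : ℤ) ∣ x')
    (heq : (p : ℤ) ^ (2 * j) * (x' ^ 2 + 4 * (p : ℤ) ^ (2 * c) * y' ^ 2) = d * (ℓ : ℤ) ^ 2) :
    False := by
  have hpz : Prime (p : ℤ) := Int.prime_iff_natAbs_prime.mpr (by simpa using hp)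
  set E : ℤ := x' ^ 2 + 4 * (p : ℤ) ^ (2 * c) * y' ^ 2 with hE
  have hpE : ¬ (p : ℤ) ∣ E := by
    intro hdvd
    have h1 : (p : ℤ) ∣ 4 * (p : ℤ) ^ (2 * c) * y' ^ 2 :=
      dvd_mul_of_dvd_left (dvd_mul_of_dvd_right (dvd_pow_self _ (by omega)) 4) _
    have h2 : (p : ℤ) ∣ x' ^ 2 := by
      have h3 : x' ^ 2 = E - 4 * (p : ℤ) ^ (2 * c) * y' ^ 2 := by rw [hE]; ring
      rw [h3]; exact dvd_sub hdvd h1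
    exact hx' (hpz.dvd_of_dvd_pow h2)
  obtain ⟨i, w, hw, hpw⟩ := exists_pow_mul hp (z := (ℓ : ℤ)) (by exact_mod_cast hl.ne')
  have heq2 : (p : ℤ) ^ (2 * j) * E = (p : ℤ) ^ (2 * i) * (d * w ^ 2) := by
    rw [heq, hw]; ring
  by_cases hpd : (p : ℤ) ∣ d
  · by_cases hp2 : p = 2
    · subst hp2
      push_cast at heq2 hpw hpE hx' hpd hE
      rcases hd with ⟨hd1, _⟩ | ⟨hd1, hd2, hd3⟩
      · omega
      have hd4 : d = 4 * (d / 4) := by omega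
      set c0 : ℤ := d / 4 with hc0
      by_cases hc0odd : (2 : ℤ) ∣ c0
      · obtain ⟨c1, hc1⟩ := hc0odd
        have hc1odd : ¬ (2 : ℤ) ∣ c1 := by
          rintro ⟨c2, hc2⟩
          have hsq : (2 : ℤ) * 2 ∣ c0 := ⟨c2, by rw [hc1, hc2]; ring⟩
          have := hd2 2 hsq
          rw [Int.isUnit_iff] at this
          omega
        have heq3 : (2 : ℤ) ^ (2 * j) * E = (2 : ℤ) ^ (2 * i + 3) * (c1 * w ^ 2) := by
          rw [heq2, hd4, hc1]; ring
        have hh := pow_cancel hpz (by push_cast; exact heq3) ?notdvd1 ?notdvd2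
        · omega
        case notdvd1 => push_cast; exact hpE
        case notdvd2 =>
          push_cast
          intro hdd
          rcases (Int.prime_two).dvd_mul.mp hdd with h | h
          · exact hc1odd h
          · exact hpw (Int.prime_two.dvd_of_dvd_pow h)
      · have heq3 : (2 : ℤ) ^ (2 * j) * E = (2 : ℤ) ^ (2 * i + 2) * (c0 * w ^ 2) := by
          rw [heq2, hd4]; ring
        have hnd : ¬ (2 : ℤ) ∣ c0 * w ^ 2 := by
          intro hdd
          rcases Int.prime_two.dvd_mul.mp hdd with h | h
          · exact hc0odd h
          · exact hpw (Int.prime_two.dvd_of_dvd_pow h)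
        obtain ⟨hji, hEe⟩ := pow_cancel hpz (by push_cast; exact heq3)
          (by push_cast; exact hpE) (by push_cast; exact hnd)
        have hE8 : ((E : ZMod 8)) = 1 := by rw [hE]; exact E_zmod8 hc hx'
        have hc08 : ((c0 : ZMod 8)) = 1 := by
          have hw8 : ((w : ZMod 8)) ^ 2 = 1 := odd_sq_zmod8 hpw
          have hcast : ((E : ℤ) : ZMod 8) = (c0 : ZMod 8) * ((w : ZMod 8)) ^ 2 := by
            rw [hEe]; push_cast; ring
          rw [hE8, hw8, mul_one] at hcast; exact hcast.symm
        have := zmod8_eq_of c0 hc08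
        omega
    · -- p odd, p ∣ d : parity contradiction on valuations
      have hp2' : ¬ (p : ℤ) ∣ 2 := by
        intro h
        have h2 := Int.le_of_dvd (by norm_num) h
        have h3 : (2 : ℤ) ≤ (p : ℕ) := by exact_mod_cast hp.two_le
        have h4 : p = 2 := by omega
        exact hp2 h4
      have hnsq : ¬ (p : ℤ) * (p : ℤ) ∣ d := by
        rcases hd with ⟨_, hsf⟩ | ⟨hd1, hd2, _⟩
        · intro h
          have := hsf _ h
          rw [Int.isUnit_iff] at this
          have h3 : (2 : ℤ) ≤ (p : ℕ) := by exact_mod_cast hp.two_le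
          omega
        · intro h
          have hd4 : d = 4 * (d / 4) := by omega
          -- p ∣ d/4
          have hp4 : ¬ (p : ℤ) ∣ 4 := fun hh =>
            hp2' (hpz.dvd_of_dvd_pow (n := 2) (by rwa [show ((2:ℤ))^2 = 4 by norm_num]))
          have hpc : (p : ℤ) ∣ d / 4 := by
            have h1 : (p : ℤ) ∣ 4 * (d / 4) := hd4 ▸ (dvd_of_mul_left_dvd h)
            rcases hpz.dvd_mul.mp h1 with h' | h'
            · exact absurd h' hp4
            · exact h'
          obtain ⟨c0', hc0'⟩ := hpc
          have hpc' : (p : ℤ) ∣ c0' := by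
            obtain ⟨t, ht⟩ := h
            have hcanc : 4 * c0' = (p : ℤ) * t := by
              have : (p : ℤ) * (4 * c0') = (p : ℤ) * ((p : ℤ) * t) := by
                rw [← mul_assoc ((p:ℤ)) ((p:ℤ)) t, ← ht, hd4, hc0']; ring
              exact mul_left_cancel₀ hpz.ne_zero this
            have h1 : (p : ℤ) ∣ 4 * c0' := ⟨t, hcanc⟩
            rcases hpz.dvd_mul.mp h1 with h' | h'
            · exact absurd h' hp4
            · exact h'
          have hsq : (p : ℤ) * (p : ℤ) ∣ d / 4 := by
            obtain ⟨s, hs⟩ := hpc'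
            exact ⟨s, by rw [hc0', hs]; ring⟩
          have := hd2 _ hsq
          rw [Int.isUnit_iff] at this
          have h3 : (2 : ℤ) ≤ (p : ℕ) := by exact_mod_cast hp.two_le
          omega
      obtain ⟨d', hd'⟩ := hpd
      have hpd' : ¬ (p : ℤ) ∣ d' := fun h => hnsq (hd' ▸ mul_dvd_mul_left _ h)
      have heq3 : (p : ℤ) ^ (2 * j) * E = (p : ℤ) ^ (2 * i + 1) * (d' * w ^ 2) := by
        rw [heq2, hd']; ring
      have hnd : ¬ (p : ℤ) ∣ d' * w ^ 2 := by
        intro hdd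
        rcases hpz.dvd_mul.mp hdd with h | h
        · exact hpd' h
        · exact hpw (hpz.dvd_of_dvd_pow h)
      obtain ⟨hji, _⟩ := pow_cancel hpz heq3 hpE hnd
      omega
  · have hnd : ¬ (p : ℤ) ∣ d * w ^ 2 := by
      intro hdd
      rcases hpz.dvd_mul.mp hdd with h | h
      · exact hpd h
      · exact hpw (hpz.dvd_of_dvd_pow h)
    obtain ⟨hji, hEe⟩ := pow_cancel hpz heq2 hpE hnd
    by_cases hp2 : p = 2
    · subst hp2
      push_cast at hpw hpE hx' hpd hE
      have hE8 : ((E : ZMod 8)) = 1 := by rw [hE]; exact E_zmod8 hc hx'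
      have hd8 : ((d : ZMod 8)) = 1 := by
        have hw8 : ((w : ZMod 8)) ^ 2 = 1 := odd_sq_zmod8 hpw
        have hcast : ((E : ℤ) : ZMod 8) = (d : ZMod 8) * ((w : ZMod 8)) ^ 2 := by
          rw [hEe]; push_cast; ring
        rw [hE8, hw8, mul_one] at hcast; exact hcast.symm
      have hmod : d % 8 = 1 := zmod8_eq_of d hd8
      apply hdp
      unfold kronP
      rw [if_pos rfl, if_neg (by omega), if_pos (Or.inl hmod)]
    · haveI : Fact p.Prime := ⟨hp⟩
      have hwne : ((w : ZMod p)) ≠ 0 := fun h =>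
        hpw ((ZMod.intCast_zmod_eq_zero_iff_dvd _ p).mp h)
      have hdne : ((d : ZMod p)) ≠ 0 := fun h =>
        hpd ((ZMod.intCast_zmod_eq_zero_iff_dvd _ p).mp h)
      have hEp : ((E : ℤ) : ZMod p) = ((x' : ZMod p)) ^ 2 := by
        have h0 : (((p : ℕ) : ZMod p)) = 0 := ZMod.natCast_self p
        have hcast : ((E : ℤ) : ZMod p) = (x' : ZMod p) ^ 2
            + 4 * (((p : ℕ) : ZMod p)) ^ (2 * c) * (y' : ZMod p) ^ 2 := by
          rw [hE]; push_cast; ring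
        rw [hcast, h0, zero_pow (by omega), mul_zero, zero_mul, add_zero]
      have hsq : (d : ZMod p) = ((x' : ZMod p) * ((w : ZMod p))⁻¹) ^ 2 := by
        have hcast : (d : ZMod p) * (w : ZMod p) ^ 2 = (x' : ZMod p) ^ 2 := by
          rw [← hEp, hEe]; push_cast; ring
        field_simp
        linear_combination hcast
      have hleg : legendreSym p d = 1 :=
        (legendreSym.eq_one_iff p hdne).mpr ⟨_, by rw [hsq, sq]⟩
      apply hdp
      unfold kronP
      rw [if_neg hp2, ← jacobiSym.legendreSym.to_jacobiSym]
      exact hleg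


private lemma fund_square {d : ℤ} (hd : IsFundamentalDiscriminant d) {t : ℤ} (ht : d = t ^ 2) :
    d = 1 := by
  rcases hd with ⟨_, hsf⟩ | ⟨hd1, hd2, hd3⟩
  · have hu := hsf t ⟨1, by rw [ht]; ring⟩
    rw [Int.isUnit_iff] at hu
    rcases hu with h | h <;> rw [ht, h] <;> ring
  · exfalso
    have h2t : (2 : ℤ) ∣ t := by
      have hdd : (2 : ℤ) ∣ t ^ 2 := by rw [← ht]; omega
      exact Int.prime_two.dvd_of_dvd_pow hdd
    obtain ⟨s, hs⟩ := h2t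
    have hds : d = 4 * s ^ 2 := by rw [ht, hs]; ring
    have hd4 : d / 4 = s ^ 2 := by rw [hds]; exact Int.mul_ediv_cancel_left _ (by norm_num)
    have hu := hd2 s ⟨1, by rw [hd4]; ring⟩
    rw [Int.isUnit_iff] at hu
    have : d / 4 = 1 := by rcases hu with h | h <;> rw [hd4, h] <;> ring
    omega

private lemma kronP_one (p : ℕ) : kronP 1 p = 1 := by
  unfold kronP
  split
  · norm_num
  · exact jacobiSym.one_left p

private lemma not_p_dvd {p M : ℕ} (hp : p.Prime) (hpM : p ∣ M) {y : ℤ}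
    (h : Int.gcd y M = 1) : ¬ (p : ℤ) ∣ y := by
  intro hd
  have h1 : p ∣ y.natAbs := by
    have h2 := Int.natAbs_dvd_natAbs.mpr hd
    simpa using h2
  have h2 : p ∣ Nat.gcd y.natAbs M := Nat.dvd_gcd h1 hpM
  have h3 : Int.gcd y M = Nat.gcd y.natAbs M := by simp [Int.gcd]
  rw [h3] at h
  rw [h] at h2
  exact hp.one_lt.ne' (Nat.dvd_one.mp h2)

private lemma scale_inj {c : ℤ} (hc : c ≠ 0) :
    Function.Injective (fun q : ℤ × ℤ => (c * q.1, c * q.2)) := by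
  intro a b hab
  simp only [Prod.mk.injEq] at hab
  exact Prod.ext (mul_left_cancel₀ hc hab.1) (mul_left_cancel₀ hc hab.2)

/-- For `M` squarefree, `p ∣ M` prime, `D = d ℓ²` a positive discriminant with `d`
fundamental, if the Kronecker symbol `(d/p) ≠ 1` then
`∑_{k≥0} r^{(M)}(D p^{-2k}) = r^{(M/p)}(D)`. -/
theorem stmt7 (M p D : ℕ) (d : ℤ) (ℓ : ℕ) (hM : Squarefree M) (hp : p.Prime)
    (hpM : p ∣ M) (hD : 0 < D) (hdisc : D % 4 = 0 ∨ D % 4 = 1)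
    (hd : IsFundamentalDiscriminant d) (hℓ : 0 < ℓ) (hfac : (D : ℤ) = d * (ℓ : ℤ) ^ 2)
    (hdp : kronP d p ≠ 1) :
    ∑' k : ℕ, (if p ^ (2 * k) ∣ D then rM M (D / p ^ (2 * k)) else 0) =
      rM (M / p) D := by
  classical
  have hppos := hp.pos
  have hpzp : Prime (p : ℤ) := Int.prime_iff_natAbs_prime.mpr (by simpa using hp)
  obtain ⟨m, hm⟩ := hpM
  have hpMdvd : p ∣ M := ⟨m, hm⟩
  have hpm : ¬ p ∣ m := by
    rintro ⟨m', hm'⟩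
    have hu : IsUnit p := hM p ⟨m', by rw [hm, hm']; ring⟩
    exact hp.one_lt.ne' (Nat.isUnit_iff.mp hu)
  have hMp : M / p = m := by rw [hm]; exact Nat.mul_div_cancel_left m hppos
  -- the scaled finsets
  set B : ℕ → Finset (ℤ × ℤ) := fun k =>
    if p ^ (2 * k) ∣ D then
      (Afin (D / p ^ (2 * k)) M).image (fun q => ((p : ℤ) ^ k * q.1, (p : ℤ) ^ k * q.2))
    else ∅ with hB
  have hpk0 : ∀ k : ℕ, ((p : ℤ) ^ k : ℤ) ≠ 0 := fun k => pow_ne_zero k (by exact_mod_cast hppos.ne')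
  have hcardB : ∀ k, (B k).card
      = if p ^ (2 * k) ∣ D then (Afin (D / p ^ (2 * k)) M).card else 0 := by
    intro k
    simp only [hB]
    by_cases hdvd : p ^ (2 * k) ∣ D
    · rw [if_pos hdvd, if_pos hdvd]
      exact Finset.card_image_of_injective _ (scale_inj (hpk0 k))
    · rw [if_neg hdvd, if_neg hdvd, Finset.card_empty]
  -- membership in B k gives the scaled form
  have hmemB : ∀ k q, q ∈ B k → ∃ a : ℤ × ℤ, a ∈ Afin (D / p ^ (2 * k)) M ∧
      q = ((p : ℤ) ^ k * a.1, (p : ℤ) ^ k * a.2) := by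
    intro k q hq
    simp only [hB] at hq
    by_cases hdvd : p ^ (2 * k) ∣ D
    · rw [if_pos hdvd] at hq
      obtain ⟨a, ha, rfl⟩ := Finset.mem_image.mp hq
      exact ⟨a, ha, rfl⟩
    · rw [if_neg hdvd] at hq
      exact absurd hq (Finset.notMem_empty q)
  -- disjointness
  have hdisj : ∀ k ∈ Finset.range D, ∀ k' ∈ Finset.range D, k ≠ k' →
      Disjoint (B k) (B k') := by
    intro k _ k' _ hkk'
    rw [Finset.disjoint_left]
    intro q hq hq'
    obtain ⟨a, ha, hqa⟩ := hmemB k q hq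
    obtain ⟨b, hb, hqb⟩ := hmemB k' q hq'
    have ha2 := (mem_Afin.mp ha).2
    have hb2 := (mem_Afin.mp hb).2
    have hya : ¬ (p : ℤ) ∣ a.2 := not_p_dvd hp hpMdvd ha2
    have hyb : ¬ (p : ℤ) ∣ b.2 := not_p_dvd hp hpMdvd hb2
    have heq : (p : ℤ) ^ k * a.2 = (p : ℤ) ^ k' * b.2 := by
      have h1 := congrArg Prod.snd hqa
      have h2 := congrArg Prod.snd hqb
      simp only at h1 h2
      rw [← h1, ← h2]
    exact hkk' (pow_cancel hpzp heq hya hyb).1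
  -- the union identity
  have hunion : (Finset.range D).biUnion B = Afin D m := by
    ext q
    simp only [Finset.mem_biUnion, Finset.mem_range]
    constructor
    · rintro ⟨k, hk, hq⟩
      have hdvd : p ^ (2 * k) ∣ D := by
        by_contra hnd
        simp only [hB, if_neg hnd] at hq
        exact absurd hq (Finset.notMem_empty q)
      obtain ⟨a, ha, rfl⟩ := hmemB k q hq
      rw [mem_Afin] at ha ⊢
      obtain ⟨ha1, ha2⟩ := ha
      have hDk : (D : ℤ) = ((p : ℤ)) ^ (2 * k) * ((D / p ^ (2 * k) : ℕ) : ℤ) := by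
        have h1 : p ^ (2 * k) * (D / p ^ (2 * k)) = D := Nat.mul_div_cancel' hdvd
        exact_mod_cast (congrArg (fun n : ℕ => (n : ℤ)) h1).symm
      constructor
      · rw [hDk, ha1]; ring
      · -- gcd (p^k * a.2) m = 1
        have hcop1 : Nat.Coprime p m := hp.coprime_iff_not_dvd.mpr hpm
        have hcop2 : Nat.Coprime a.2.natAbs m := by
          have hgcd : Nat.gcd a.2.natAbs M = 1 := by
            have h3 : Int.gcd a.2 M = Nat.gcd a.2.natAbs M := by simp [Int.gcd]
            rw [← h3]; exact ha2
          exact Nat.Coprime.coprime_dvd_right ⟨p, by rw [hm]; ring⟩ hgcd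
        have hcop : Nat.Coprime ((p : ℤ) ^ k * a.2).natAbs m := by
          rw [Int.natAbs_mul, Int.natAbs_pow]
          simpa using Nat.Coprime.mul (hcop1.pow_left k) hcop2
        have h3 : Int.gcd ((p : ℤ) ^ k * a.2) m = Nat.gcd ((p : ℤ) ^ k * a.2).natAbs m := by
          simp [Int.gcd]
        rw [h3]; exact hcop
    · intro hq
      rw [mem_Afin] at hq
      obtain ⟨hq1, hq2⟩ := hq
      -- second coordinate is nonzero
      have hy0 : q.2 ≠ 0 := by
        intro h0
        rw [h0] at hq1
        have hq1' : (D : ℤ) = q.1 ^ 2 := by rw [hq1]; ring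
        have hl2 : ((ℓ : ℤ)) ^ 2 ∣ q.1 ^ 2 := ⟨d, by rw [← hq1', hfac]; ring⟩
        obtain ⟨t, ht⟩ := (Int.pow_dvd_pow_iff two_ne_zero).mp hl2
        have hl0 : ((ℓ : ℤ)) ^ 2 ≠ 0 := pow_ne_zero _ (by exact_mod_cast hℓ.ne')
        have hdt : d = t ^ 2 := by
          have h1 : ((ℓ : ℤ)) ^ 2 * d = ((ℓ : ℤ)) ^ 2 * t ^ 2 := by
            rw [show ((ℓ:ℤ))^2 * d = d * ((ℓ:ℤ))^2 by ring, ← hfac, hq1', ht]; ring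
          exact mul_left_cancel₀ hl0 h1
        exact hdp ((fund_square hd hdt) ▸ kronP_one p)
      obtain ⟨k, y', hy', hpy'⟩ := exists_pow_mul hp hy0
      -- p^k divides the first coordinate
      have hx : (p : ℤ) ^ k ∣ q.1 := by
        by_contra hnx
        have hx0 : q.1 ≠ 0 := fun h => hnx (h ▸ dvd_zero _)
        obtain ⟨j, x', hx', hpx'⟩ := exists_pow_mul hp hx0
        have hjk : j < k := by
          by_contra hjk
          push_neg at hjk
          exact hnx (hx' ▸ dvd_mul_of_dvd_left (pow_dvd_pow _ hjk) _)
        obtain ⟨c, rfl⟩ : ∃ c, k = j + c := ⟨k - j, by omega⟩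
        have hc : 0 < c := by omega
        exact key hp (j := j) (y' := y') hc hd hdp hℓ hpx'
          (by rw [← hfac, hq1, hx', hy']; ring)
      obtain ⟨x'', hx''⟩ := hx
      have hDn : (D : ℤ) = ((p : ℤ)) ^ (2 * k) * (x'' ^ 2 + 4 * y' ^ 2) := by
        rw [hq1, hx'', hy']; ring
      obtain ⟨n, hn⟩ := Int.eq_ofNat_of_zero_le (a := x'' ^ 2 + 4 * y' ^ 2) (by positivity)
      have hDn' : D = p ^ (2 * k) * n := by
        have := hDn
        rw [hn] at this
        exact_mod_cast this
      have hdvd : p ^ (2 * k) ∣ D := ⟨n, hDn'⟩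
      have hdiv : D / p ^ (2 * k) = n := by
        rw [hDn']; exact Nat.mul_div_cancel_left n (pow_pos hppos _)
      have hkD : k < D := by
        have h1 : p ^ (2 * k) ≤ D := Nat.le_of_dvd hD hdvd
        have h2 : k < 2 ^ k := (Nat.lt_two_pow_self (n := k))
        have h3 : 2 ^ k ≤ 2 ^ (2 * k) := Nat.pow_le_pow_right (by norm_num) (by omega)
        have h4 : 2 ^ (2 * k) ≤ p ^ (2 * k) := Nat.pow_le_pow_left hp.two_le _
        omega
      refine ⟨k, hkD, ?_⟩
      simp only [hB, if_pos hdvd]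
      apply Finset.mem_image.mpr
      refine ⟨(x'', y'), ?_, ?_⟩
      · rw [mem_Afin]
        constructor
        · rw [hdiv, hn]
        · -- gcd y' M = 1
          have hpy : ¬ p ∣ y'.natAbs := by
            intro hdd
            exact hpy' (Int.dvd_natAbs.mp (by exact_mod_cast (Int.natCast_dvd_natCast.mpr hdd)))
          have hcop1 : Nat.Coprime y'.natAbs p := (hp.coprime_iff_not_dvd.mpr hpy).symm
          have hcop2 : Nat.Coprime y'.natAbs m := by
            have hgcd : Nat.gcd q.2.natAbs m = 1 := by
              have h3 : Int.gcd q.2 m = Nat.gcd q.2.natAbs m := by simp [Int.gcd]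
              rw [← h3]; exact hq2
            refine Nat.Coprime.coprime_dvd_left ?_ hgcd
            exact Int.natAbs_dvd_natAbs.mpr ⟨(p : ℤ) ^ k, by rw [hy']; ring⟩
          have hcop : Nat.Coprime y'.natAbs M := by
            rw [hm]; exact Nat.Coprime.mul_right hcop1 hcop2
          have h3 : Int.gcd y' M = Nat.gcd y'.natAbs M := by simp [Int.gcd]
          rw [h3]; exact hcop
      · exact Prod.ext (by rw [hx'']) (by rw [hy'])
  -- now the sum manipulation
  have hvanish : ∀ k ∉ Finset.range D,
      (if p ^ (2 * k) ∣ D then rM M (D / p ^ (2 * k)) else 0) = 0 := by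
    intro k hk
    rw [Finset.mem_range, not_lt] at hk
    rw [if_neg]
    intro hdvd
    have h1 : p ^ (2 * k) ≤ D := Nat.le_of_dvd hD hdvd
    have h2 : D < 2 ^ D := (Nat.lt_two_pow_self (n := D))
    have h3 : 2 ^ D ≤ 2 ^ (2 * k) := Nat.pow_le_pow_right (by norm_num) (by omega)
    have h4 : 2 ^ (2 * k) ≤ p ^ (2 * k) := Nat.pow_le_pow_left hp.two_le _
    omega
  rw [tsum_eq_sum hvanish]
  simp only [rM_eq]
  rw [hMp]
  have hterm : ∀ k, (if p ^ (2 * k) ∣ D then ((Afin (D / p ^ (2 * k)) M).card : ℚ) / 2 else 0)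
      = ((B k).card : ℚ) / 2 := by
    intro k
    rw [hcardB]
    by_cases hdvd : p ^ (2 * k) ∣ D
    · rw [if_pos hdvd, if_pos hdvd]
    · rw [if_neg hdvd, if_neg hdvd]; norm_num
  rw [Finset.sum_congr rfl (fun k _ => hterm k), ← Finset.sum_div]
  congr 1
  norm_cast
  rw [← Finset.card_biUnion hdisj, hunion]
end

section
/- For Re(s) > 1/2 and r ∈ ℝ, ∫_{-∞}^∞ (2 cosh(u/2))^{-2s} e^{iru} du = B(s + ir, s - ir), where B denotes the Euler Beta function B(a,b) = Γ(a)Γ(b)/Γ(a+b). -/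
open Complex MeasureTheory Set

/-- For `Re s > 1/2` and `r ∈ ℝ`,
`∫_ℝ (2 cosh(u/2))^{-2s} e^{iru} du = B(s + ir, s - ir)`,
where `B(a,b) = Γ(a)Γ(b)/Γ(a+b)`. -/
theorem stmt10 (s : ℂ) (hs : 1 / 2 < s.re) (r : ℝ) :
    (∫ u : ℝ, ((2 * Real.cosh (u / 2) : ℝ) : ℂ) ^ (-(2 * s)) *
        Complex.exp (Complex.I * r * u)) =
      Complex.Gamma (s + Complex.I * r) * Complex.Gamma (s - Complex.I * r) /
        Complex.Gamma (s + Complex.I * r + (s - Complex.I * r)) := by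
  set a : ℂ := s + Complex.I * r with ha_def
  set b : ℂ := s - Complex.I * r with hb_def
  have hIr : ((Complex.I * r).re) = 0 := by simp
  have ha : 0 < a.re := by
    have : a.re = s.re := by simp [ha_def]
    rw [this]; linarith
  have hb : 0 < b.re := by
    have : b.re = s.re := by simp [hb_def, Complex.sub_re]
    rw [this]; linarith
  set f : ℝ → ℝ := fun t => Real.log t - Real.log (1 - t) with hf_def
  set f' : ℝ → ℝ := fun t => 1 / t + 1 / (1 - t) with hf'_def
  -- image of (0,1) under f is ℝ
  have himg : f '' Ioo (0:ℝ) 1 = univ := by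
    apply eq_univ_of_forall
    intro u
    refine ⟨Real.exp u / (1 + Real.exp u), ⟨?_, ?_⟩, ?_⟩
    · positivity
    · rw [div_lt_one (by positivity)]; linarith [Real.exp_pos u]
    · have h1 : (0:ℝ) < 1 + Real.exp u := by positivity
      have h2 : 1 - Real.exp u / (1 + Real.exp u) = 1 / (1 + Real.exp u) := by
        field_simp
        ring
      simp only [hf_def, h2]
      rw [Real.log_div (Real.exp_ne_zero u) h1.ne', Real.log_div one_ne_zero h1.ne',
        Real.log_exp, Real.log_one]
      ring
  have hinj : InjOn f (Ioo (0:ℝ) 1) := by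
    intro p hp q hq h
    have hp0 := hp.1; have hp1 : 0 < 1 - p := by linarith [hp.2]
    have hq0 := hq.1; have hq1 : 0 < 1 - q := by linarith [hq.2]
    have : Real.log p + Real.log (1 - q) = Real.log q + Real.log (1 - p) := by
      simp only [hf_def] at h; linarith
    have h2 : p * (1 - q) = q * (1 - p) := by
      have := congrArg Real.exp this
      rwa [Real.exp_add, Real.exp_add, Real.exp_log hp0, Real.exp_log hq0,
        Real.exp_log hp1, Real.exp_log hq1] at this
    nlinarith
  have hderiv : ∀ t ∈ Ioo (0:ℝ) 1, HasDerivWithinAt f (f' t) (Ioo (0:ℝ) 1) t := by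
    intro t ht
    have ht0 := ht.1; have ht1 : 0 < 1 - t := by linarith [ht.2]
    have h1 : HasDerivAt (fun t : ℝ => Real.log t) t⁻¹ t := Real.hasDerivAt_log ht0.ne'
    have h2 : HasDerivAt (fun t : ℝ => Real.log (1 - t)) ((1 - t)⁻¹ * (-1)) t := by
      exact (Real.hasDerivAt_log ht1.ne').comp t (((hasDerivAt_id t).const_sub 1))
    have := (h1.sub h2).hasDerivWithinAt (s := Ioo (0:ℝ) 1)
    refine this.congr_deriv ?_
    show _ = 1 / t + 1 / (1 - t)
    field_simp
    ring
  have key : (∫ u : ℝ, ((2 * Real.cosh (u / 2) : ℝ) : ℂ) ^ (-(2 * s)) *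
        Complex.exp (Complex.I * r * u)) =
      ∫ t in Ioo (0:ℝ) 1, (t:ℂ) ^ (a - 1) * ((1:ℂ) - t) ^ (b - 1) := by
    rw [← setIntegral_univ, ← himg,
      integral_image_eq_integral_abs_deriv_smul measurableSet_Ioo hderiv hinj]
    apply setIntegral_congr_fun measurableSet_Ioo
    intro t ht
    dsimp only
    have ht0 := ht.1; have ht1 : 0 < 1 - t := by linarith [ht.2]
    set L1 := Real.log t with hL1
    set L2 := Real.log (1 - t) with hL2
    have hexp1 : Real.exp L1 = t := Real.exp_log ht0
    have hexp2 : Real.exp L2 = 1 - t := Real.exp_log ht1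
    -- cosh computation
    have hcosh : 2 * Real.cosh (f t / 2) = Real.exp (-(L1 + L2) / 2) := by
      simp only [hf_def, Real.cosh_eq, ← hL1, ← hL2]
      have e1 : Real.exp ((L1 - L2) / 2) = t * Real.exp (-(L1 + L2) / 2) := by
        rw [← hexp1, ← Real.exp_add]; congr 1; ring
      have e2 : Real.exp (-((L1 - L2) / 2)) = (1 - t) * Real.exp (-(L1 + L2) / 2) := by
        rw [← hexp2, ← Real.exp_add]; congr 1; ring
      rw [e1, e2]; ring
    -- derivative absolute value
    have hderiv_val : |f' t| = (t * (1 - t))⁻¹ := by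
      have h1 : f' t = (t * (1 - t))⁻¹ := by
        simp only [hf'_def]; field_simp
        ring
      rw [h1, abs_of_pos (by positivity)]
    have hbase_pos : (0:ℝ) < Real.exp (-(L1 + L2) / 2) := Real.exp_pos _
    -- turn cpow into cexp
    have hcpow : ((2 * Real.cosh (f t / 2) : ℝ) : ℂ) ^ (-(2 * s)) =
        Complex.exp ((((-(L1 + L2) / 2 : ℝ)) : ℂ) * (-(2 * s))) := by
      rw [hcosh, Complex.cpow_def_of_ne_zero (by exact_mod_cast hbase_pos.ne')]
      congr 2
      rw [← Complex.ofReal_log hbase_pos.le, Real.log_exp]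
    have hrt : (t:ℂ) ^ (a - 1) = Complex.exp ((L1 : ℂ) * (a - 1)) := by
      rw [Complex.cpow_def_of_ne_zero (by exact_mod_cast ht0.ne'),
        ← Complex.ofReal_log ht0.le]
    have hr1t : ((1:ℂ) - t) ^ (b - 1) = Complex.exp ((L2 : ℂ) * (b - 1)) := by
      have : ((1:ℂ) - t) = ((1 - t : ℝ) : ℂ) := by push_cast; ring
      rw [this, Complex.cpow_def_of_ne_zero (by exact_mod_cast ht1.ne'),
        ← Complex.ofReal_log ht1.le]
    have hinv : (((t * (1 - t))⁻¹ : ℝ) : ℂ) = Complex.exp (-(((L1:ℂ) + L2))) := by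
      have : (t * (1 - t) : ℝ) = Real.exp (L1 + L2) := by
        rw [Real.exp_add, hexp1, hexp2]
      rw [this]
      push_cast [Complex.ofReal_exp]
      rw [← Complex.exp_neg]
    rw [hderiv_val, real_smul, hinv, hcpow, hrt, hr1t]
    rw [show Complex.I * r * (f t) = Complex.I * r * ((L1 : ℂ) - L2) by
      simp only [hf_def, ← hL1, ← hL2]; push_cast; ring]
    rw [← Complex.exp_add, ← Complex.exp_add, ← Complex.exp_add]
    congr 1
    push_cast
    ring
  rw [key]
  have hbeta : Complex.betaIntegral a b =
      ∫ t in Ioo (0:ℝ) 1, (t:ℂ) ^ (a - 1) * ((1:ℂ) - t) ^ (b - 1) := by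
    rw [Complex.betaIntegral, intervalIntegral.integral_of_le zero_le_one,
      integral_Ioc_eq_integral_Ioo]
  rw [← hbeta]
  have hG := Complex.Gamma_mul_Gamma_eq_betaIntegral ha hb
  have hne : Complex.Gamma (a + b) ≠ 0 := by
    apply Complex.Gamma_ne_zero_of_re_pos
    have : (a + b).re = 2 * s.re := by
      simp [ha_def, hb_def, Complex.add_re, Complex.sub_re]; ring
    rw [this]; linarith
  rw [eq_div_iff hne, hG]
  ring
end

section
/- For Re(s) > 0 and D > 0, ∫_{√D}^∞ y^{-2s}/(y + √D) dy = (D^{-s}/2) · (ψ(s + 1/2) - ψ(s)), where ψ = Γ'/Γ is the digamma function. -/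
open Complex MeasureTheory Filter Topology intervalIntegral



/-- The digamma function `ψ = Γ'/Γ`. -/

noncomputable def digamma (z : ℂ) : ℂ := deriv Complex.Gamma z / Complex.Gamma z



noncomputable def aterm (k : ℕ) (s : ℂ) : ℂ := (s + k)⁻¹ - (s + k + 1/2)⁻¹

noncomputable def Sfun (s : ℂ) : ℂ := ∑' k : ℕ, aterm k s

noncomputable def dfun (s : ℂ) : ℂ := _root_.digamma (s + 1/2) - _root_.digamma s

noncomputable def psir (t : ℝ) : ℝ := deriv Real.Gamma t / Real.Gamma t



lemma ne_neg_nat {s : ℂ} (hs : 0 < s.re) : ∀ m : ℕ, s ≠ -m := by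
  intro m h
  have h2 : s.re = (-(m:ℂ)).re := by rw [h]
  simp only [neg_re, natCast_re] at h2
  have : (0:ℝ) ≤ m := Nat.cast_nonneg m
  linarith

lemma GammaNe {s : ℂ} (hs : 0 < s.re) : Complex.Gamma s ≠ 0 :=
  Complex.Gamma_ne_zero (ne_neg_nat hs)

lemma GammaDiff {s : ℂ} (hs : 0 < s.re) : DifferentiableAt ℂ Complex.Gamma s :=
  Complex.differentiableAt_Gamma s (ne_neg_nat hs)

lemma sne {s : ℂ} (hs : 0 < s.re) : s ≠ 0 := by
  intro h; rw [h] at hs; simp at hs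

lemma digamma_add_one {s : ℂ} (hs : 0 < s.re) : _root_.digamma (s + 1) = _root_.digamma s + 1/s := by
  have hs1 : 0 < (s+1).re := by simp [Complex.add_re]; linarith
  have h1 : HasDerivAt Complex.Gamma (deriv Complex.Gamma s) s := (GammaDiff hs).hasDerivAt
  have h2 : HasDerivAt (fun z => Complex.Gamma (z+1)) (deriv Complex.Gamma (s+1)) s := by
    have h := (GammaDiff hs1).hasDerivAt.comp s ((hasDerivAt_id s).add_const 1)
    rw [mul_one] at h
    exact h
  have h3 : HasDerivAt (fun z => z * Complex.Gamma z)
      (1 * Complex.Gamma s + s * deriv Complex.Gamma s) s := (hasDerivAt_id s).mul h1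
  have h4 : (fun z => Complex.Gamma (z+1)) =ᶠ[nhds s] (fun z => z * Complex.Gamma z) := by
    filter_upwards [eventually_ne_nhds (sne hs)] with z hz
    exact Complex.Gamma_add_one z hz
  have h5 : deriv Complex.Gamma (s+1) = Complex.Gamma s + s * deriv Complex.Gamma s := by
    have := (h2.congr_of_eventuallyEq h4.symm).unique h3
    rw [this]; ring
  unfold _root_.digamma
  rw [h5, Complex.Gamma_add_one s (sne hs)]
  field_simp [sne hs, GammaNe hs]
  ring

lemma summable_sq (c : ℝ) (hc : 0 < c) : Summable (fun k : ℕ => ((c + k)^2)⁻¹) := by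
  set m := min c 1 with hm
  have hm0 : 0 < m := lt_min hc one_pos
  have base : Summable (fun k : ℕ => (((k:ℝ)+1)^2)⁻¹) := by
    have := (summable_nat_add_iff (f := fun k : ℕ => ((k:ℝ)^2)⁻¹) 1).mpr
      (Real.summable_one_div_nat_pow.mpr one_lt_two |>.congr (by intro n; simp [one_div]))
    exact this.congr (by intro n; push_cast; ring_nf)
  refine (base.mul_left (m^2)⁻¹).of_nonneg_of_le (fun k => by positivity) (fun k => ?_)
  have h1 : m * ((k:ℝ)+1) ≤ c + k := by
    have h2 : m ≤ c := min_le_left _ _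
    have h3 : m ≤ 1 := min_le_right _ _
    nlinarith [Nat.cast_nonneg (α := ℝ) k]
  have h4 : (m * ((k:ℝ)+1))^2 ≤ (c+k)^2 := pow_le_pow_left₀ (by positivity) h1 2
  have h5 : ((c+k)^2)⁻¹ ≤ ((m * ((k:ℝ)+1))^2)⁻¹ := by
    apply inv_anti₀ (by positivity) h4
  calc ((c+k)^2)⁻¹ ≤ ((m * ((k:ℝ)+1))^2)⁻¹ := h5
    _ = (m^2)⁻¹ * ((((k:ℝ)+1))^2)⁻¹ := by rw [mul_pow, mul_inv]

lemma sk_ne {s : ℂ} (hs : 0 < s.re) (k : ℕ) : s + k ≠ 0 := by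
  intro h
  have := congrArg Complex.re h
  simp only [Complex.add_re, Complex.natCast_re, Complex.zero_re] at this
  have h2 : (0:ℝ) ≤ k := Nat.cast_nonneg k
  linarith

lemma skh_ne {s : ℂ} (hs : 0 < s.re) (k : ℕ) : s + k + 1/2 ≠ 0 := by
  intro h
  have := congrArg Complex.re h
  have h12 : ((1:ℂ)/2).re = 1/2 := by norm_num
  simp only [Complex.add_re, Complex.natCast_re, Complex.zero_re, h12] at this
  have h2 : (0:ℝ) ≤ k := Nat.cast_nonneg k
  linarith

lemma aterm_eq (k : ℕ) {s : ℂ} (hs : 0 < s.re) :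
    aterm k s = (1/2) * ((s + k)⁻¹ * (s + k + 1/2)⁻¹) := by
  unfold aterm
  rw [inv_sub_inv (sk_ne hs k) (skh_ne hs k)]
  have h : s + k + 1/2 - (s + k) = 1/2 := by ring
  rw [h, div_eq_mul_inv, mul_inv]

lemma norm_sk {s : ℂ} {σ0 : ℝ} (hσ0 : 0 < σ0) (hs : σ0 ≤ s.re) (k : ℕ) (c : ℝ)
    (hc : 0 ≤ c) : ‖(s + k + (c:ℂ))⁻¹‖ ≤ (σ0 + k)⁻¹ := by
  rw [norm_inv]
  apply inv_anti₀ (by positivity)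
  calc σ0 + (k:ℝ) ≤ (s + k + (c:ℂ)).re := by
        simp only [Complex.add_re, Complex.natCast_re, Complex.ofReal_re]
        linarith
    _ ≤ |(s + k + (c:ℂ)).re| := le_abs_self _
    _ ≤ ‖s + k + (c:ℂ)‖ := Complex.abs_re_le_norm _

lemma aterm_bound (k : ℕ) {σ0 : ℝ} (hσ0 : 0 < σ0) {s : ℂ} (hs : σ0 ≤ s.re) :
    ‖aterm k s‖ ≤ (1/2) * ((σ0 + k)^2)⁻¹ := by
  have hs0 : 0 < s.re := lt_of_lt_of_le hσ0 hs
  rw [aterm_eq k hs0, norm_mul, norm_mul]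
  have h1 : ‖(s + k)⁻¹‖ ≤ (σ0 + k)⁻¹ := by
    have := norm_sk hσ0 hs k 0 le_rfl; simpa using this
  have h2 : ‖(s + k + 1/2)⁻¹‖ ≤ (σ0 + k)⁻¹ := by
    have := norm_sk hσ0 hs k (1/2) (by norm_num)
    have hc : (((1:ℝ)/2 : ℝ) : ℂ) = 1/2 := by norm_num
    rwa [hc] at this
  have h3 : ‖((1:ℂ)/2)‖ = 1/2 := by norm_num
  calc ‖((1:ℂ)/2)‖ * (‖(s + k)⁻¹‖ * ‖(s + k + 1/2)⁻¹‖)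
      ≤ (1/2) * ((σ0 + k)⁻¹ * (σ0 + k)⁻¹) := by
        rw [h3]
        gcongr <;> positivity
    _ = (1/2) * ((σ0 + k)^2)⁻¹ := by rw [← mul_inv]; ring_nf

theorem HasDerivAt.im_of_complex {e : ℂ → ℂ} {e' : ℂ} {z : ℝ} (h : HasDerivAt e e' z) :
    HasDerivAt (fun x : ℝ => (e x).im) e'.im z := by
  have A : HasFDerivAt ((↑) : ℝ → ℂ) ofRealCLM z := ofRealCLM.hasFDerivAt
  have B : HasFDerivAt e ((ContinuousLinearMap.smulRight 1 e' : ℂ →L[ℂ] ℂ).restrictScalars ℝ)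
      (ofRealCLM z) := h.hasFDerivAt.restrictScalars ℝ
  have C : HasFDerivAt Complex.im imCLM (e (ofRealCLM z)) := imCLM.hasFDerivAt
  convert (C.comp z (B.comp z A)).hasDerivAt
  · rfl
  · rfl
  · rfl
  rw [ContinuousLinearMap.comp_apply, ContinuousLinearMap.comp_apply]
  simp

lemma deriv_Gamma_real (σ : ℝ) (hσ : 0 < σ) :
    deriv Complex.Gamma σ = ((deriv Real.Gamma σ : ℝ) : ℂ) := by
  have hre : (0:ℝ) < (σ:ℂ).re := by simpa using hσ
  have hd : HasDerivAt Complex.Gamma (deriv Complex.Gamma σ) σ := (GammaDiff hre).hasDerivAt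
  have hre' : HasDerivAt (fun x : ℝ => (Complex.Gamma (x:ℂ)).re) (deriv Complex.Gamma σ).re σ :=
    hd.real_of_complex
  have him : HasDerivAt (fun x : ℝ => (Complex.Gamma (x:ℂ)).im) (deriv Complex.Gamma σ).im σ :=
    hd.im_of_complex
  have hfun : (fun x : ℝ => (Complex.Gamma (x:ℂ)).re) = Real.Gamma := by
    funext x; rw [Complex.Gamma_ofReal]; simp
  have hfun2 : (fun x : ℝ => (Complex.Gamma (x:ℂ)).im) = fun _ => (0:ℝ) := by
    funext x; rw [Complex.Gamma_ofReal]; simp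
  rw [hfun] at hre'
  rw [hfun2] at him
  have h1 : (deriv Complex.Gamma σ).re = deriv Real.Gamma σ := hre'.deriv.symm ▸ rfl
  have h2 : (deriv Complex.Gamma σ).im = 0 := by
    have := (hasDerivAt_const σ (0:ℝ)).unique him
    exact this.symm
  apply Complex.ext
  · simpa using hre'.deriv.symm
  · simpa using h2

lemma digamma_real (σ : ℝ) (hσ : 0 < σ) :
    _root_.digamma σ = ((psir σ : ℝ) : ℂ) := by
  unfold _root_.digamma
  rw [deriv_Gamma_real σ hσ, Complex.Gamma_ofReal, psir, Complex.ofReal_div]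

lemma psir_mono {x y : ℝ} (hx : 0 < x) (hxy : x ≤ y) : psir x ≤ psir y := by
  unfold psir
  have hy : 0 < y := lt_of_lt_of_le hx hxy
  set f := Real.log ∘ Real.Gamma with hf
  have hc : ConvexOn ℝ (Set.Ioi 0) f := Real.convexOn_log_Gamma
  have hder : ∀ {t : ℝ}, 0 < t → DifferentiableAt ℝ f t := by
    intro t ht
    exact (Real.differentiableAt_Gamma (fun m => by
      have : (0:ℝ) ≤ m := Nat.cast_nonneg m; intro h; rw [h] at ht; linarith)).log
      (Real.Gamma_pos_of_pos ht).ne'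
  have hdf : ∀ {t : ℝ}, 0 < t → deriv f t = deriv Real.Gamma t / Real.Gamma t := by
    intro t ht
    rw [hf, Function.comp_def]
    exact deriv.log (Real.differentiableAt_Gamma (fun m => by
      have : (0:ℝ) ≤ m := Nat.cast_nonneg m; intro h; rw [h] at ht; linarith))
      (Real.Gamma_pos_of_pos ht).ne'
  rw [← hdf hx, ← hdf hy]
  rcases eq_or_lt_of_le hxy with h | h
  · rw [h]
  · calc deriv f x ≤ slope f x y :=
        hc.deriv_le_slope (Set.mem_Ioi.mpr hx) (Set.mem_Ioi.mpr hy) h (hder hx)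
      _ ≤ deriv f y := hc.slope_le_deriv (Set.mem_Ioi.mpr hx) (Set.mem_Ioi.mpr hy) h (hder hy)

example : True := trivial

lemma dfun_real_bound (σ : ℝ) (hσ : 0 < σ) : ‖dfun σ‖ ≤ 1/σ := by
  have hc1 : (σ:ℂ) + 1/2 = ((σ + 1/2 : ℝ) : ℂ) := by push_cast; ring
  have hc2 : (σ:ℂ) + 1 = ((σ + 1 : ℝ) : ℂ) := by push_cast; ring
  have hre : (0:ℝ) < (σ:ℂ).re := by simpa using hσ
  have hfe : psir (σ+1) = psir σ + 1/σ := by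
    have h := digamma_add_one hre
    rw [hc2, digamma_real (σ+1) (by linarith), digamma_real σ hσ] at h
    have h2 : ((psir (σ+1) : ℝ) : ℂ) = ((psir σ + 1/σ : ℝ) : ℂ) := by
      rw [h]; push_cast; ring
    exact_mod_cast h2
  have hdf : dfun σ = ((psir (σ + 1/2) - psir σ : ℝ) : ℂ) := by
    rw [dfun, hc1, digamma_real (σ+1/2) (by linarith), digamma_real σ hσ]
    push_cast; ring
  rw [hdf, Complex.norm_real, Real.norm_eq_abs, _root_.abs_of_nonneg
    (by have := psir_mono hσ (by linarith : σ ≤ σ + 1/2); linarith)]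
  have h1 : psir (σ + 1/2) ≤ psir (σ + 1) := psir_mono (by linarith) (by linarith)
  linarith

lemma dfun_step {s : ℂ} (hs : 0 < s.re) : dfun s = aterm 0 s + dfun (s + 1) := by
  have hs2 : 0 < (s + 1/2).re := by
    have h12 : ((1:ℂ)/2).re = 1/2 := by norm_num
    simp only [Complex.add_re, h12]; linarith
  have h1 := digamma_add_one hs
  have h2 := digamma_add_one hs2
  have e1 : s + 1/2 + 1 = s + 1 + 1/2 := by ring
  rw [e1] at h2
  unfold dfun aterm
  rw [h1, h2]
  push_cast
  ring

lemma dfun_telescope {s : ℂ} (hs : 0 < s.re) (n : ℕ) :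
    dfun s = (∑ k ∈ Finset.range n, aterm k s) + dfun (s + n) := by
  induction n with
  | zero => simp
  | succ n ih =>
    have hsn : 0 < (s + n).re := by
      simp only [Complex.add_re, Complex.natCast_re]
      have : (0:ℝ) ≤ n := Nat.cast_nonneg n
      linarith
    rw [ih, Finset.sum_range_succ, dfun_step hsn]
    have e : s + n + 1 = s + (n+1 : ℕ) := by push_cast; ring
    rw [e]
    have ea : aterm 0 (s + n) = aterm n s := by unfold aterm; push_cast; ring_nf
    rw [ea]
    ring

lemma summable_aterm {s : ℂ} (hs : 0 < s.re) : Summable (fun k : ℕ => aterm k s) := by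
  apply Summable.of_norm
  apply Summable.of_nonneg_of_le (fun k => norm_nonneg _) (fun k => aterm_bound k hs le_rfl)
  exact (summable_sq s.re hs).mul_left (1/2)

lemma dfun_eq_S_real (σ : ℝ) (hσ : 0 < σ) : dfun σ = Sfun σ := by
  have hre : (0:ℝ) < (σ:ℂ).re := by simpa using hσ
  have h1 : Tendsto (fun n => ∑ k ∈ Finset.range n, aterm k (σ:ℂ)) atTop (𝓝 (Sfun σ)) :=
    (summable_aterm hre).hasSum.tendsto_sum_nat
  have hzero : Tendsto (fun n : ℕ => dfun ((σ:ℂ) + n)) atTop (𝓝 0) := by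
    refine squeeze_zero_norm (a := fun n : ℕ => 1/(σ + n)) (fun n => ?_) ?_
    · have hc : (σ:ℂ) + (n:ℂ) = ((σ + n : ℝ) : ℂ) := by push_cast; ring
      rw [hc]
      exact dfun_real_bound (σ + n) (by positivity)
    · have ht : Tendsto (fun n : ℕ => σ + (n:ℝ)) atTop atTop :=
        tendsto_atTop_add_const_left _ σ tendsto_natCast_atTop_atTop
      simpa [one_div, Pi.inv_def] using ht.inv_tendsto_atTop
  have h2 : Tendsto (fun n => ∑ k ∈ Finset.range n, aterm k (σ:ℂ)) atTop (𝓝 (dfun σ)) := by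
    have := tendsto_const_nhds (x := dfun (σ:ℂ)) (f := atTop (α := ℕ)) |>.sub hzero
    rw [sub_zero] at this
    refine this.congr (fun n => ?_)
    rw [dfun_telescope hre n]; ring
  exact (tendsto_nhds_unique h2 h1)

lemma analytic_dfun : AnalyticOnNhd ℂ dfun {s : ℂ | 0 < s.re} := by
  have hopen : IsOpen {s : ℂ | 0 < s.re} := by
    exact isOpen_lt continuous_const Complex.continuous_re
  have hG : AnalyticOnNhd ℂ Complex.Gamma {s : ℂ | 0 < s.re} :=
    DifferentiableOn.analyticOnNhd (fun s hs => (GammaDiff hs).differentiableWithinAt) hopen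
  have hG' : AnalyticOnNhd ℂ (deriv Complex.Gamma) {s : ℂ | 0 < s.re} := hG.deriv
  have hdig : AnalyticOnNhd ℂ _root_.digamma {s : ℂ | 0 < s.re} :=
    hG'.div hG (fun s hs => GammaNe hs)
  have hshift : AnalyticOnNhd ℂ (fun s => _root_.digamma (s + 1/2)) {s : ℂ | 0 < s.re} := by
    apply hdig.comp (analyticOnNhd_id.add analyticOnNhd_const)
    intro s hs
    simp only [Set.mem_setOf_eq] at hs
    show 0 < ((s + 1/2).re)
    have h12 : ((1:ℂ)/2).re = 1/2 := by norm_num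
    simp only [Complex.add_re, h12]
    linarith
  exact hshift.sub hdig

lemma analytic_S : AnalyticOnNhd ℂ Sfun {s : ℂ | 0 < s.re} := by
  intro s hs
  simp only [Set.mem_setOf_eq] at hs
  set σ0 := s.re / 2 with hσ0
  have hσ0pos : 0 < σ0 := by positivity
  set U := {z : ℂ | σ0 < z.re} with hU
  have hUopen : IsOpen U := isOpen_lt continuous_const Complex.continuous_re
  have hdiff : DifferentiableOn ℂ Sfun U := by
    apply differentiableOn_tsum_of_summable_norm
      ((summable_sq σ0 hσ0pos).mul_left (1/2))
      (fun k => ?_) hUopen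
      (fun k w hw => aterm_bound k hσ0pos (le_of_lt hw))
    · intro z hz
      have hz' : 0 < z.re := lt_trans hσ0pos hz
      apply DifferentiableWithinAt.sub
      · exact (((differentiableAt_id (x := z)).add_const (k:ℂ)).inv (sk_ne hz' k)).differentiableWithinAt
      · have he : (fun z : ℂ => (z + k + 1/2)⁻¹) = fun z : ℂ => (z + ((k:ℂ) + 1/2))⁻¹ := by
          funext z; rw [add_assoc]
        rw [he]
        exact ((differentiableAt_id.add_const _).inv (by
          have h := skh_ne hz' k; rwa [add_assoc] at h)).differentiableWithinAt
  exact (hdiff.analyticAt (hUopen.mem_nhds (by simp only [hU, Set.mem_setOf_eq, hσ0]; linarith)))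

lemma dfun_eq_S {s : ℂ} (hs : 0 < s.re) : dfun s = Sfun s := by
  have hpre : IsPreconnected {s : ℂ | 0 < s.re} := by
    apply Convex.isPreconnected
    exact convex_halfSpace_re_gt 0
  have h1 : (1:ℂ) ∈ {s : ℂ | 0 < s.re} := by simp
  have hfreq : ∃ᶠ z in 𝓝[≠] (1:ℂ), dfun z = Sfun z := by
    have htt : Tendsto (fun n : ℕ => ((1 + 1/((n:ℝ)+1) : ℝ) : ℂ)) atTop (𝓝[≠] (1:ℂ)) := by
      rw [tendsto_nhdsWithin_iff]
      constructor
      · have : Tendsto (fun n : ℕ => (1 + 1/((n:ℝ)+1) : ℝ)) atTop (𝓝 1) := by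
          simpa using tendsto_const_nhds (x := (1:ℝ)) (f := atTop (α := ℕ)) |>.add
            tendsto_one_div_add_atTop_nhds_zero_nat
        have h2 := (Complex.continuous_ofReal.tendsto 1).comp this
        simpa [Function.comp_def] using h2
      · filter_upwards with n
        simp only [Set.mem_compl_iff, Set.mem_singleton_iff]
        intro h
        have : (1 + 1/((n:ℝ)+1) : ℝ) = 1 := by exact_mod_cast h
        have hp : 0 < 1/((n:ℝ)+1) := by positivity
        linarith
    exact htt.frequently (Frequently.of_forall (fun n =>
      dfun_eq_S_real _ (by positivity)))
  exact analytic_dfun.eqOn_of_preconnected_of_frequently_eq analytic_S hpre h1 hfreq hs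

lemma Ioo_eq_ii {E : Type*} [NormedAddCommGroup E] [NormedSpace ℝ E] (f : ℝ → E) :
    ∫ x in Set.Ioo (0:ℝ) 1, f x = ∫ x in (0:ℝ)..1, f x := by
  rw [intervalIntegral.integral_of_le zero_le_one, MeasureTheory.integral_Ioc_eq_integral_Ioo]

lemma int_rpow_Ioo {a : ℝ} (ha : -1 < a) :
    ∫ x in Set.Ioo (0:ℝ) 1, x ^ a = (a+1)⁻¹ := by
  rw [Ioo_eq_ii, integral_rpow (Or.inl ha)]
  rw [Real.one_rpow, Real.zero_rpow (by linarith : a + 1 ≠ 0)]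
  ring

lemma int_cpow_Ioo {w : ℂ} (hw : -1 < w.re) :
    ∫ x in Set.Ioo (0:ℝ) 1, (x:ℂ) ^ w = (w+1)⁻¹ := by
  rw [Ioo_eq_ii, integral_cpow (Or.inl hw)]
  push_cast
  rw [Complex.one_cpow, Complex.zero_cpow (by
      intro h
      have h2 := congrArg Complex.re h
      simp only [Complex.add_re, Complex.one_re, Complex.zero_re] at h2
      linarith : w + 1 ≠ 0)]
  ring

lemma integrable_cpow_Ioo {w : ℂ} (hw : -1 < w.re) :
    IntegrableOn (fun x : ℝ => (x:ℂ) ^ w) (Set.Ioo (0:ℝ) 1) := by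
  have h := (intervalIntegrable_cpow' (a := 0) (b := 1) hw)
  rw [intervalIntegrable_iff_integrableOn_Ioc_of_le zero_le_one] at h
  exact h.mono_set Set.Ioo_subset_Ioc_self

lemma integrable_rpow_Ioo {a : ℝ} (ha : -1 < a) :
    IntegrableOn (fun x : ℝ => x ^ a) (Set.Ioo (0:ℝ) 1) := by
  have h := (intervalIntegrable_rpow' (a := 0) (b := 1) ha)
  rw [intervalIntegrable_iff_integrableOn_Ioc_of_le zero_le_one] at h
  exact h.mono_set Set.Ioo_subset_Ioc_self

noncomputable def fk (s : ℂ) (k : ℕ) (x : ℝ) : ℂ :=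
  (x:ℂ) ^ (2*s - 1 + 2*(k:ℂ)) - (x:ℂ) ^ (2*s + 2*(k:ℂ))

lemma re1 (s : ℂ) (k : ℕ) : (2*s - 1 + 2*(k:ℂ)).re = 2*s.re - 1 + 2*k := by
  simp [Complex.add_re, Complex.sub_re, Complex.mul_re]

lemma re2 (s : ℂ) (k : ℕ) : (2*s + 2*(k:ℂ)).re = 2*s.re + 2*k := by
  simp [Complex.add_re, Complex.mul_re]

lemma hre1 {s : ℂ} (hs : 0 < s.re) (k : ℕ) : -1 < (2*s - 1 + 2*(k:ℂ)).re := by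
  rw [re1]
  have : (0:ℝ) ≤ k := Nat.cast_nonneg k
  linarith

lemma hre2 {s : ℂ} (hs : 0 < s.re) (k : ℕ) : -1 < (2*s + 2*(k:ℂ)).re := by
  rw [re2]
  have : (0:ℝ) ≤ k := Nat.cast_nonneg k
  linarith

lemma fk_integrable {s : ℂ} (hs : 0 < s.re) (k : ℕ) :
    IntegrableOn (fk s k) (Set.Ioo (0:ℝ) 1) :=
  (integrable_cpow_Ioo (hre1 hs k)).sub (integrable_cpow_Ioo (hre2 hs k))

lemma fk_tsum {s : ℂ} {x : ℝ} (hx : x ∈ Set.Ioo (0:ℝ) 1) :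
    (x:ℂ) ^ (2*s - 1) / (1 + x) = ∑' k, fk s k x := by
  obtain ⟨hx0, hx1⟩ := hx
  have hxne : (x:ℂ) ≠ 0 := by exact_mod_cast hx0.ne'
  have hnorm : ‖(x:ℂ)^2‖ < 1 := by
    rw [norm_pow, Complex.norm_real, Real.norm_eq_abs, abs_of_pos hx0]
    nlinarith
  have geo := hasSum_geometric_of_norm_lt_one hnorm
  have hpow : ∀ (w : ℂ) (k : ℕ), (x:ℂ) ^ (w + 2*(k:ℂ)) = (x:ℂ)^w * ((x:ℂ)^2)^k := by
    intro w k
    rw [Complex.cpow_add _ _ hxne]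
    congr 1
    have h2k : (2*(k:ℂ)) = ((2*k : ℕ) : ℂ) := by push_cast; ring
    rw [h2k, Complex.cpow_natCast, pow_mul]
  have e1 : (fun k : ℕ => (x:ℂ)^(2*s-1) * ((x:ℂ)^2)^k) =
      fun k : ℕ => (x:ℂ) ^ (2*s - 1 + 2*(k:ℂ)) := funext fun k => (hpow _ k).symm
  have e2 : (fun k : ℕ => (x:ℂ)^(2*s) * ((x:ℂ)^2)^k) =
      fun k : ℕ => (x:ℂ) ^ (2*s + 2*(k:ℂ)) := funext fun k => (hpow _ k).symm
  have h1 : HasSum (fun k : ℕ => (x:ℂ) ^ (2*s - 1 + 2*(k:ℂ)))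
      ((x:ℂ)^(2*s-1) * (1 - (x:ℂ)^2)⁻¹) := e1 ▸ geo.mul_left _
  have h2 : HasSum (fun k : ℕ => (x:ℂ) ^ (2*s + 2*(k:ℂ)))
      ((x:ℂ)^(2*s) * (1 - (x:ℂ)^2)⁻¹) := e2 ▸ geo.mul_left _
  simp only [fk]
  rw [(h1.sub h2).tsum_eq]
  have hxs : (x:ℂ)^(2*s) = (x:ℂ)^(2*s-1) * (x:ℂ) := by
    have h := Complex.cpow_add (2*s-1) 1 hxne (x := (x:ℂ))
    rw [Complex.cpow_one] at h
    rw [show (2*s - 1) + 1 = 2*s by ring] at h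
    exact h
  rw [hxs]
  have hne1 : (1:ℂ) + x ≠ 0 := by
    intro h
    have h2 := congrArg Complex.re h
    simp only [Complex.add_re, Complex.one_re, Complex.ofReal_re, Complex.zero_re] at h2
    linarith
  have hne2 : (1:ℂ) - (x:ℂ)^2 ≠ 0 := by
    intro h
    have h2 := congrArg Complex.re h
    have : ((x:ℂ)^2) = ((x^2 : ℝ) : ℂ) := by push_cast; ring
    rw [this] at h2
    simp only [Complex.sub_re, Complex.one_re, Complex.ofReal_re, Complex.zero_re] at h2
    nlinarith
  field_simp
  ring

lemma fk_factor {s : ℂ} {x : ℝ} (hx : x ∈ Set.Ioo (0:ℝ) 1) (k : ℕ) :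
    fk s k x = (x:ℂ) ^ (2*s - 1 + 2*(k:ℂ)) * (1 - (x:ℂ)) := by
  have hxne : (x:ℂ) ≠ 0 := by exact_mod_cast hx.1.ne'
  have h := Complex.cpow_add (2*s - 1 + 2*(k:ℂ)) 1 hxne (x := (x:ℂ))
  rw [Complex.cpow_one] at h
  rw [show (2*s - 1 + 2*(k:ℂ)) + 1 = 2*s + 2*(k:ℂ) by ring] at h
  unfold fk
  rw [h]
  ring

lemma fk_norm {s : ℂ} {x : ℝ} (hx : x ∈ Set.Ioo (0:ℝ) 1) (k : ℕ) :
    ‖fk s k x‖ = x ^ (2*s.re - 1 + 2*(k:ℝ)) - x ^ (2*s.re + 2*(k:ℝ)) := by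
  obtain ⟨hx0, hx1⟩ := hx
  rw [fk_factor ⟨hx0, hx1⟩ k, norm_mul]
  have h1 : ‖(x:ℂ) ^ (2*s - 1 + 2*(k:ℂ))‖ = x ^ (2*s.re - 1 + 2*(k:ℝ)) := by
    rw [Complex.norm_cpow_eq_rpow_re_of_pos hx0, re1]
  have h2 : ‖1 - (x:ℂ)‖ = 1 - x := by
    have : (1:ℂ) - x = ((1 - x : ℝ) : ℂ) := by push_cast; ring
    rw [this, Complex.norm_real, Real.norm_eq_abs, abs_of_pos (by linarith)]
  rw [h1, h2]
  have h3 : x ^ (2*s.re + 2*(k:ℝ)) = x ^ (2*s.re - 1 + 2*(k:ℝ)) * x := by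
    rw [← Real.rpow_add_one hx0.ne' (2*s.re - 1 + 2*(k:ℝ))]
    ring_nf
  rw [h3]
  ring

lemma fk_norm_integral {s : ℂ} (hs : 0 < s.re) (k : ℕ) :
    ∫ x in Set.Ioo (0:ℝ) 1, ‖fk s k x‖ =
      (2*s.re + 2*(k:ℝ))⁻¹ - (2*s.re + 2*(k:ℝ) + 1)⁻¹ := by
  have hk : (0:ℝ) ≤ k := Nat.cast_nonneg k
  have ha : (-1:ℝ) < 2*s.re - 1 + 2*(k:ℝ) := by linarith
  have hb : (-1:ℝ) < 2*s.re + 2*(k:ℝ) := by linarith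
  rw [setIntegral_congr_fun measurableSet_Ioo (fun x hx => fk_norm hx k)]
  rw [integral_sub ((integrable_rpow_Ioo ha).mono_set Set.Subset.rfl)
    ((integrable_rpow_Ioo hb).mono_set Set.Subset.rfl)]
  rw [int_rpow_Ioo ha, int_rpow_Ioo hb]
  have e1 : 2*s.re - 1 + 2*(k:ℝ) + 1 = 2*s.re + 2*(k:ℝ) := by ring
  have e2 : 2*s.re + 2*(k:ℝ) + 1 = 2*s.re + 2*(k:ℝ) + 1 := rfl
  rw [e1]

lemma summable_fk_norm_int {s : ℂ} (hs : 0 < s.re) :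
    Summable (fun k : ℕ => ∫ x in Set.Ioo (0:ℝ) 1, ‖fk s k x‖) := by
  apply Summable.of_nonneg_of_le
    (fun k => integral_nonneg (fun x => norm_nonneg _))
    (fun k => ?_)
    ((summable_sq s.re hs).mul_left (1/4))
  rw [fk_norm_integral hs k]
  have hk : (0:ℝ) ≤ k := Nat.cast_nonneg k
  have h1 : 0 < 2*s.re + 2*(k:ℝ) := by linarith
  have h2 : 0 < 2*s.re + 2*(k:ℝ) + 1 := by linarith
  have key : (2*s.re + 2*(k:ℝ))⁻¹ - (2*s.re + 2*(k:ℝ) + 1)⁻¹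
      = ((2*s.re + 2*(k:ℝ)) * (2*s.re + 2*(k:ℝ) + 1))⁻¹ := by
    field_simp
    ring
  rw [key]
  have h3 : (2*s.re + 2*(k:ℝ))^2 ≤ (2*s.re + 2*(k:ℝ)) * (2*s.re + 2*(k:ℝ) + 1) := by nlinarith
  have h4 : ((2*s.re + 2*(k:ℝ)) * (2*s.re + 2*(k:ℝ) + 1))⁻¹ ≤ ((2*s.re + 2*(k:ℝ))^2)⁻¹ :=
    inv_anti₀ (by positivity) h3
  have h5 : ((2*s.re + 2*(k:ℝ))^2)⁻¹ = (1/4) * ((s.re + (k:ℝ))^2)⁻¹ := by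
    rw [show 2*s.re + 2*(k:ℝ) = 2*(s.re + k) by ring, mul_pow]
    norm_num
    ring
  rw [h5] at h4
  linarith

lemma G_eq_halfS {s : ℂ} (hs : 0 < s.re) :
    (∫ x in Set.Ioo (0:ℝ) 1, (x:ℂ) ^ (2*s - 1) / (1 + x)) = Sfun s / 2 := by
  rw [setIntegral_congr_fun measurableSet_Ioo (fun x hx => fk_tsum (s := s) hx)]
  rw [← MeasureTheory.integral_tsum_of_summable_integral_norm
    (fun k => fk_integrable hs k) (summable_fk_norm_int hs)]
  have hterm : ∀ k : ℕ, (∫ x in Set.Ioo (0:ℝ) 1, fk s k x) = aterm k s / 2 := by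
    intro k
    unfold fk
    rw [integral_sub (integrable_cpow_Ioo (hre1 hs k)) (integrable_cpow_Ioo (hre2 hs k))]
    rw [int_cpow_Ioo (hre1 hs k), int_cpow_Ioo (hre2 hs k)]
    have e1 : 2*s - 1 + 2*(k:ℂ) + 1 = 2*(s + k) := by ring
    have e2 : 2*s + 2*(k:ℂ) + 1 = 2*(s + k + 1/2) := by ring
    rw [e1, e2, aterm]
    rw [mul_inv, mul_inv]
    have hne1 := sk_ne hs k
    have hne2 := skh_ne hs k
    field_simp
  rw [tsum_congr hterm, tsum_div_const]
  rfl

lemma image_phi {c : ℝ} (hc : 0 < c) : (fun x => c / x) '' Set.Ioo (0:ℝ) 1 = Set.Ioi c := by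
  ext y
  constructor
  · rintro ⟨x, ⟨hx0, hx1⟩, rfl⟩
    have : c < c / x := by
      rw [lt_div_iff₀ hx0]
      nlinarith
    exact this
  · intro hy
    have hy' : c < y := hy
    have hy0 : 0 < y := lt_trans hc hy'
    refine ⟨c / y, ⟨by positivity, by rw [div_lt_one hy0]; exact hy'⟩, ?_⟩
    field_simp

lemma phi_deriv {c : ℝ} (hc : 0 < c) {x : ℝ} (hx : x ∈ Set.Ioo (0:ℝ) 1) :
    HasDerivWithinAt (fun x => c / x) (-(c / x^2)) (Set.Ioo (0:ℝ) 1) x := by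
  have hne : x ≠ 0 := hx.1.ne'
  have h := (hasDerivAt_inv hne).const_mul c
  have he : (fun y : ℝ => c * y⁻¹) = fun y => c / y := by
    funext y; rw [div_eq_mul_inv]
  rw [he] at h
  have : c * -(x^2)⁻¹ = -(c / x^2) := by field_simp
  rw [this] at h
  exact h.hasDerivWithinAt

lemma phi_inj {c : ℝ} (hc : 0 < c) : Set.InjOn (fun x => c / x) (Set.Ioo (0:ℝ) 1) := by
  intro a ha b hb hab
  simp only at hab
  have ha0 : a ≠ 0 := ha.1.ne'
  have hb0 : b ≠ 0 := hb.1.ne'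
  field_simp at hab
  exact hab.symm

lemma subst {s : ℂ} (hs : 0 < s.re) {D : ℝ} (hD : 0 < D) :
    (∫ y in Set.Ioi (Real.sqrt D), ((y : ℂ) ^ (-(2 * s)) / ((y : ℂ) + Real.sqrt D))) =
      (D : ℂ) ^ (-s) * ∫ x in Set.Ioo (0:ℝ) 1, (x:ℂ) ^ (2*s - 1) / (1 + x) := by
  set c := Real.sqrt D with hcdef
  have hc : 0 < c := Real.sqrt_pos.mpr hD
  have himg := image_phi hc
  rw [← himg]
  rw [MeasureTheory.integral_image_eq_integral_abs_deriv_smul measurableSet_Ioo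
    (fun x hx => phi_deriv hc hx) (phi_inj hc)]
  rw [← MeasureTheory.integral_const_mul]
  apply setIntegral_congr_fun measurableSet_Ioo
  intro x hx
  obtain ⟨hx0, hx1⟩ := hx
  have hX : (x:ℂ) ≠ 0 := by exact_mod_cast hx0.ne'
  have hC : (c:ℂ) ≠ 0 := by exact_mod_cast hc.ne'
  have h1X : (1:ℂ) + x ≠ 0 := by
    intro h
    have h2 := congrArg Complex.re h
    simp only [Complex.add_re, Complex.one_re, Complex.ofReal_re, Complex.zero_re] at h2
    linarith
  show |(-(c/x^2))| • (((c/x : ℝ) : ℂ) ^ (-(2 * s)) / (((c/x : ℝ):ℂ) + (c:ℂ))) =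
      (D:ℂ) ^ (-s) * ((x:ℂ) ^ (2 * s - 1) / (1 + (x:ℂ)))
  have habs : |(-(c/x^2))| = c/x^2 := by
    rw [abs_neg, abs_of_pos (by positivity)]
  have harg : (x:ℂ).arg ≠ Real.pi := by
    rw [Complex.arg_ofReal_of_nonneg hx0.le]
    exact (Real.pi_ne_zero).symm
  have hsplit : (((c/x : ℝ)) : ℂ) ^ (-(2*s)) = (c:ℂ) ^ (-(2*s)) * (((x⁻¹ : ℝ)) : ℂ) ^ (-(2*s)) := by
    rw [show (c/x:ℝ) = c * x⁻¹ from div_eq_mul_inv c x, Complex.ofReal_mul,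
      Complex.mul_cpow_ofReal_nonneg hc.le (by positivity)]
  have hinv : (((x⁻¹ : ℝ)) : ℂ) ^ (-(2*s)) = (x:ℂ) ^ (2*s) := by
    rw [Complex.ofReal_inv, Complex.inv_cpow _ _ harg, Complex.cpow_neg, inv_inv]
  have hD2 : (D:ℂ) ^ (-s) = (c:ℂ) ^ (-(2*s)) := by
    have hmul : (D:ℝ) = c * c := (Real.mul_self_sqrt hD.le).symm
    rw [hmul, Complex.ofReal_mul, Complex.mul_cpow_ofReal_nonneg hc.le hc.le,
      ← Complex.cpow_add _ _ hC]
    congr 1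
    ring
  have hx2s1 : (x:ℂ) ^ (2*s - 1) = (x:ℂ) ^ (2*s) / (x:ℂ) := by
    have h := Complex.cpow_add (2*s) (-1) hX (x := (x:ℂ))
    rw [Complex.cpow_neg_one] at h
    rw [show 2*s + (-1) = 2*s - 1 by ring] at h
    rw [h, div_eq_mul_inv]
  have hcx : (((c/x : ℝ)) : ℂ) = (c:ℂ)/(x:ℂ) := by push_cast; ring
  have hcx2 : (((c/x^2 : ℝ)) : ℂ) = (c:ℂ)/((x:ℂ))^2 := by push_cast; ring
  have hden : (c:ℂ)/(x:ℂ) + (c:ℂ) ≠ 0 := by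
    have he : (c:ℂ)/(x:ℂ) + (c:ℂ) = (c:ℂ) * (1 + (x:ℂ)) / (x:ℂ) := by
      field_simp
    rw [he]
    exact div_ne_zero (mul_ne_zero hC h1X) hX
  rw [habs, Complex.real_smul, hsplit, hinv, hD2, hx2s1, hcx, hcx2]
  have hz : ((c:ℂ) * (x:ℂ) ^ 2 + (c:ℂ) * (x:ℂ) ^ 3) ≠ 0 := by
    have he2 : ((c:ℂ) * (x:ℂ)^2 + (c:ℂ) * (x:ℂ)^3) = (c:ℂ) * (x:ℂ)^2 * (1+(x:ℂ)) := by ring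
    rw [he2]
    exact mul_ne_zero (mul_ne_zero hC (pow_ne_zero 2 hX)) h1X
  field_simp



/-- For `Re s > 0` and `D > 0`,
`∫_{√D}^∞ y^{-2s}/(y + √D) dy = (D^{-s}/2)(ψ(s + 1/2) - ψ(s))`. -/
theorem stmt11 (s : ℂ) (hs : 0 < s.re) (D : ℝ) (hD : 0 < D) :
    (∫ y in Set.Ioi (Real.sqrt D), ((y : ℂ) ^ (-(2 * s)) / ((y : ℂ) + Real.sqrt D))) =
      (D : ℂ) ^ (-s) / 2 * (_root_.digamma (s + 1 / 2) - _root_.digamma s) := by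
  rw [subst hs hD, G_eq_halfS hs, ← dfun_eq_S hs]
  unfold dfun
  ring
end
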